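/- arXiv:1503.03616 — 3 statements merged into one kernel-verified Lean document; each statement's English description precedes it below -/
import Mathlib

section
/- Let 𝐭 ∈ T_𝐧. Then B_𝐭 ∈ 𝔅_𝐭, and B_𝐭 is the unique element of 𝔅_𝐭 minimizing |Par(−)|: for every B ∈ 𝔅_𝐭 with B ≠ B_𝐭, one has |Par(B)| > |Par(B_𝐭)|. -/
open scoped BigOperators

/-- A partition: infinite weakly decreasing sequence of non-negative integers that is
eventually zero.  `parts i` denotes `λ_{i+1}` (zero-indexed). -/
structure SeqPartition where
  parts : ℕ → ℕ
  antitone' : ∀ i j : ℕ, i ≤ j → parts j ≤ parts i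
  eventually_zero' : ∃ N : ℕ, ∀ k : ℕ, N ≤ k → parts k = 0

/-- `β_s(λ) = {λ_i + s - i : i ∈ ℕ}` (with `i ≥ 1`; `λ_{i+1} = parts i`). -/
def betaSet (lam : SeqPartition) (s : ℤ) : Set ℤ :=
  {x : ℤ | ∃ i : ℕ, x = (lam.parts i : ℤ) + s - (i + 1)}

/-- A set of β-numbers. -/
def IsBetaSet (B : Set ℤ) : Prop :=
  (B ∩ {x : ℤ | 0 ≤ x}).Finite ∧ ({x : ℤ | x < 0} \ B).Finite

/-- `𝔰(B) = |ℕ₀ ∩ B| − |ℤ_{<0} \ B|`. -/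
noncomputable def sInv (B : Set ℤ) : ℤ :=
  ((B ∩ {x : ℤ | 0 ≤ x}).ncard : ℤ) - (({x : ℤ | x < 0} \ B).ncard : ℤ)

/-- The Young diagram `[λ] = {(i,j) ∈ ℕ² : j ≤ λ_i}` with `i, j ≥ 1`. -/
def diagram (lam : SeqPartition) : Set (ℕ × ℕ) :=
  {p : ℕ × ℕ | 1 ≤ p.1 ∧ 1 ≤ p.2 ∧ p.2 ≤ lam.parts (p.1 - 1)}

/-- `|λ|`, the number of nodes of `λ`. -/
noncomputable def wt (lam : SeqPartition) : ℕ := (diagram lam).ncard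

/-- The `n`-residue of a node `(i,j)`, i.e. the class of `j - i` modulo `n`. -/
def res (n : ℕ) (p : ℕ × ℕ) : ZMod n := (((p.2 : ℤ) - (p.1 : ℤ)) : ZMod n)

def Removable (lam : SeqPartition) (p : ℕ × ℕ) : Prop :=
  p ∈ diagram lam ∧ ∃ mu : SeqPartition, diagram mu = diagram lam \ {p}

def Addable (lam : SeqPartition) (p : ℕ × ℕ) : Prop :=
  p ∉ diagram lam ∧ ∃ mu : SeqPartition, diagram mu = diagram lam ∪ {p}

/-- The rim hook `𝔥_{a,b}(λ) = {(i,j) ∈ [λ] : i ≥ a, j ≥ max(b, λ_{i+1})}`. -/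
def rimHook (lam : SeqPartition) (a b : ℕ) : Set (ℕ × ℕ) :=
  {p : ℕ × ℕ | p ∈ diagram lam ∧ a ≤ p.1 ∧ b ≤ p.2 ∧ lam.parts p.1 ≤ p.2}

/-- `μ` is obtained from `λ` by unwrapping a rim hook of size `c`. -/
def UnwrapHook (lam mu : SeqPartition) (c : ℕ) : Prop :=
  ∃ a b : ℕ, (a, b) ∈ diagram lam ∧ diagram mu = diagram lam \ rimHook lam a b ∧
    (rimHook lam a b).ncard = c

/-- Strict lexicographic order on partitions: `λ > μ`. -/
def PartGT (lam mu : SeqPartition) : Prop :=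
  ∃ r : ℕ, (∀ k : ℕ, k < r → lam.parts k = mu.parts k) ∧ mu.parts r < lam.parts r

def PartGE (lam mu : SeqPartition) : Prop := lam = mu ∨ PartGT lam mu

/-- Lexicographic comparison of integer sequences: `a > b`. -/
def SeqGT (a b : ℕ → ℤ) : Prop :=
  ∃ r : ℕ, (∀ k : ℕ, k < r → a k = b k) ∧ b r < a r

/-- `B > B'` for sets of β-numbers, comparing decreasing enumerations lexicographically. -/
def BetaGT (B B' : Set ℤ) : Prop :=
  ∃ e e' : ℕ → ℤ, StrictAnti e ∧ StrictAnti e' ∧ Set.range e = B ∧ Set.range e' = B' ∧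
    SeqGT e e'

def BetaGE (B B' : Set ℤ) : Prop := B = B' ∨ BetaGT B B'

/-- The relation `B →_n B'`. -/
def StepN (n : ℕ) (B B' : Set ℤ) : Prop :=
  ∃ a b : ℤ, ∃ i : ℕ, a ∈ B ∧ b ∈ B ∧ 1 ≤ i ∧ b + (i : ℤ) * (n : ℤ) < a ∧
    a - (i : ℤ) * (n : ℤ) ∉ B ∧ b + (i : ℤ) * (n : ℤ) ∉ B ∧
    B' = (B \ {a, b}) ∪ {a - (i : ℤ) * (n : ℤ), b + (i : ℤ) * (n : ℤ)}

/-- The Jantzen order `λ ≥_{J_n} μ` on partitions. -/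
def JantzenGE (n : ℕ) (lam mu : SeqPartition) : Prop :=
  ∃ s : ℤ, Relation.ReflTransGen (StepN n) (betaSet lam s) (betaSet mu s)

def JantzenGT (n : ℕ) (lam mu : SeqPartition) : Prop := JantzenGE n lam mu ∧ lam ≠ mu

/-- `n = n_1 + ⋯ + n_r`. -/
def nTot {r : ℕ} (nn : Fin r → ℕ) : ℕ := ∑ k, nn k

/-- `σ_{j-1} = n_1 + ⋯ + n_{j-1}` (the sum of the entries before index `j`). -/
def sigBefore {r : ℕ} (nn : Fin r → ℕ) (j : Fin r) : ℕ :=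
  ∑ k ∈ Finset.univ.filter (fun k : Fin r => (k : ℕ) < (j : ℕ)), nn k

/-- `X^𝐧_{i,j}(B) = {x − in − σ_{j−1} : x ∈ B ∩ ℤ^𝐧_{i,j}}`. -/
def Xset {r : ℕ} (nn : Fin r → ℕ) (B : Set ℤ) (i : ℤ) (j : Fin r) : Set ℤ :=
  {y : ℤ | ∃ x ∈ B, (sigBefore nn j : ℤ) ≤ x - i * (nTot nn : ℤ) ∧
    x - i * (nTot nn : ℤ) < (sigBefore nn j : ℤ) + (nn j : ℤ) ∧
    y = x - i * (nTot nn : ℤ) - (sigBefore nn j : ℤ)}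

/-- `𝚝^𝐧_B (i,j) = |X^𝐧_{i,j}(B)|`. -/
noncomputable def tfun {r : ℕ} (nn : Fin r → ℕ) (B : Set ℤ) : ℤ × Fin r → ℕ :=
  fun p => (Xset nn B p.1 p.2).ncard

/-- Membership in `T_𝐧`. -/
def memT {r : ℕ} (nn : Fin r → ℕ) (t : ℤ × Fin r → ℕ) : Prop :=
  (∀ p : ℤ × Fin r, t p ≤ nn p.2) ∧
  {p : ℤ × Fin r | 0 ≤ p.1 ∧ t p ≠ 0}.Finite ∧
  {p : ℤ × Fin r | p.1 < 0 ∧ t p ≠ nn p.2}.Finite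

/-- `𝔰(𝐭)`. -/
noncomputable def sT {r : ℕ} (nn : Fin r → ℕ) (t : ℤ × Fin r → ℕ) : ℤ :=
  (∑ᶠ p ∈ {p : ℤ × Fin r | 0 ≤ p.1}, (t p : ℤ)) -
  (∑ᶠ p ∈ {p : ℤ × Fin r | p.1 < 0}, ((nn p.2 : ℤ) - (t p : ℤ)))

/-- `B_𝐭`, determined by `X^𝐧_{i,j}(B_𝐭) = {0, …, 𝐭(i,j) − 1}`. -/
def Bt {r : ℕ} (nn : Fin r → ℕ) (t : ℤ × Fin r → ℕ) : Set ℤ :=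
  {x : ℤ | ∃ i : ℤ, ∃ j : Fin r,
    i * (nTot nn : ℤ) + (sigBefore nn j : ℤ) ≤ x ∧
    x < i * (nTot nn : ℤ) + (sigBefore nn j : ℤ) + (t (i, j) : ℤ)}

/-- One-runner version: `X^{(m)}_i(B)`. -/
def X1 (m : ℕ) (B : Set ℤ) (i : ℤ) : Set ℤ :=
  {y : ℤ | ∃ x ∈ B, i * (m : ℤ) ≤ x ∧ x < (i + 1) * (m : ℤ) ∧ y = x - i * (m : ℤ)}

noncomputable def tfun1 (m : ℕ) (B : Set ℤ) : ℤ → ℕ := fun i => (X1 m B i).ncard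

def memT1 (m : ℕ) (t : ℤ → ℕ) : Prop :=
  (∀ i : ℤ, t i ≤ m) ∧ {i : ℤ | 0 ≤ i ∧ t i ≠ 0}.Finite ∧ {i : ℤ | i < 0 ∧ t i ≠ m}.Finite

noncomputable def sT1 (m : ℕ) (t : ℤ → ℕ) : ℤ :=
  (∑ᶠ i ∈ {i : ℤ | 0 ≤ i}, (t i : ℤ)) - (∑ᶠ i ∈ {i : ℤ | i < 0}, ((m : ℤ) - (t i : ℤ)))

/-- The strict partial order on `T_𝐧`. -/
def Tgt {r : ℕ} (nn : Fin r → ℕ) (t t' : ℤ × Fin r → ℕ) : Prop :=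
  sT nn t = sT nn t' ∧
  ∃ i0 : ℤ, ∃ j0 : Fin r, t' (i0, j0) < t (i0, j0) ∧
    ∀ (i : ℤ) (j : Fin r), (i0 < i ∨ (i = i0 ∧ (j0 : ℕ) < (j : ℕ))) → t (i, j) = t' (i, j)

def Tge {r : ℕ} (nn : Fin r → ℕ) (t t' : ℤ × Fin r → ℕ) : Prop := t = t' ∨ Tgt nn t t'

/-- `m_c` from Statement 5. -/
noncomputable def mcount (lam : SeqPartition) (s : ℤ) (n : ℕ) (c : ℕ) : ℤ :=
  ({i : ℤ | 0 ≤ i ∧ (c : ℤ) + i * (n : ℤ) ∈ betaSet lam s}.ncard : ℤ) -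
  ({i : ℤ | i < 0 ∧ (c : ℤ) + i * (n : ℤ) ∉ betaSet lam s}.ncard : ℤ)

/-- `C = ⋃_{c<n} {c + in : i < m_c}` from Statement 5. -/
def coreSet (lam : SeqPartition) (s : ℤ) (n : ℕ) : Set ℤ :=
  {y : ℤ | ∃ c : ℕ, c < n ∧ ∃ i : ℤ, i < mcount lam s n c ∧ y = (c : ℤ) + i * (n : ℤ)}

/-- The projection `π_𝐭` of the free module `𝔉` onto the span of `{s(λ) : λ ∈ 𝒫_𝐭}`. -/
noncomputable def proj {R : Type*} [Semiring R] {T : Type*} (ind : SeqPartition → T) (t : T)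
    (v : SeqPartition →₀ R) : SeqPartition →₀ R := by
  classical
  exact Finsupp.onFinset v.support (fun mu => if ind mu = t then v mu else 0) <| by
    intro mu h
    rw [Finsupp.mem_support_iff]
    intro hv
    apply h
    simp [hv]

section AuxStatement12

open Set

noncomputable def Gfun (B : Set ℤ) : ℤ :=
  (∑ᶠ x ∈ B ∩ {x : ℤ | 0 ≤ x}, (x + 1)) + ∑ᶠ x ∈ {x : ℤ | x < 0} \ B, (-x - 1)

lemma fsum_eq (s : Set ℤ) (hs : s.Finite) (f : ℤ → ℤ) :
    ∑ᶠ x ∈ s, f x = ∑ x ∈ hs.toFinset, f x := finsum_mem_eq_finite_toFinset_sum f hs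

lemma neg_fsum (s : Set ℤ) (hs : s.Finite) :
    ∑ᶠ x ∈ s, (-x - 1 : ℤ) = - ∑ᶠ x ∈ s, (x + 1 : ℤ) := by
  rw [fsum_eq s hs, fsum_eq s hs, ← Finset.sum_neg_distrib]
  exact Finset.sum_congr rfl (by intros; ring)

lemma Gdiff (B B' : Set ℤ) (hB : IsBetaSet B) (hB' : IsBetaSet B')
    (h1 : (B \ B').Finite) (h2 : (B' \ B).Finite) :
    Gfun B - Gfun B' = (∑ᶠ x ∈ B \ B', (x + 1)) - ∑ᶠ x ∈ B' \ B, (x + 1) := by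
  set P : Set ℤ := {x : ℤ | 0 ≤ x} with hP
  set Ng : Set ℤ := {x : ℤ | x < 0} with hNg
  have hsplit : ∀ x : ℤ, x ∈ P ∨ x ∈ Ng := fun x => by
    rcases le_or_gt 0 x with h | h
    · exact Or.inl h
    · exact Or.inr h
  -- finiteness
  have fC : ((B ∩ B') ∩ P).Finite := hB.1.subset (by intro x hx; exact ⟨hx.1.1, hx.2⟩)
  have f1P : ((B \ B') ∩ P).Finite := hB.1.subset (by intro x hx; exact ⟨hx.1.1, hx.2⟩)
  have f2P : ((B' \ B) ∩ P).Finite := hB'.1.subset (by intro x hx; exact ⟨hx.1.1, hx.2⟩)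
  have fU : (Ng \ (B ∪ B')).Finite := hB.2.subset (fun x hx => ⟨hx.1, fun h => hx.2 (Or.inl h)⟩)
  have f1N : ((B \ B') ∩ Ng).Finite := hB'.2.subset (fun x hx => ⟨hx.2, hx.1.2⟩)
  have f2N : ((B' \ B) ∩ Ng).Finite := hB.2.subset (fun x hx => ⟨hx.2, hx.1.2⟩)
  -- set equalities
  have E1 : B ∩ P = ((B ∩ B') ∩ P) ∪ ((B \ B') ∩ P) := by
    ext x; by_cases hx : x ∈ B' <;> simp [Set.mem_inter_iff, Set.mem_diff, hx] <;> tauto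
  have E2 : B' ∩ P = ((B ∩ B') ∩ P) ∪ ((B' \ B) ∩ P) := by
    ext x; by_cases hx : x ∈ B <;> simp [Set.mem_inter_iff, Set.mem_diff, hx] <;> tauto
  have E3 : Ng \ B = (Ng \ (B ∪ B')) ∪ ((B' \ B) ∩ Ng) := by
    ext x; by_cases hx : x ∈ B' <;> simp [Set.mem_diff, Set.mem_inter_iff, hx] <;> tauto
  have E4 : Ng \ B' = (Ng \ (B ∪ B')) ∪ ((B \ B') ∩ Ng) := by
    ext x; by_cases hx : x ∈ B <;> simp [Set.mem_diff, Set.mem_inter_iff, hx] <;> tauto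
  have hPN : P ∪ Ng = Set.univ := by
    ext x; simp only [Set.mem_union, Set.mem_univ, iff_true, hP, hNg, Set.mem_setOf_eq]
    exact le_or_gt 0 x
  have E5 : B \ B' = ((B \ B') ∩ P) ∪ ((B \ B') ∩ Ng) := by
    rw [← Set.inter_union_distrib_left, hPN, Set.inter_univ]
  have E6 : B' \ B = ((B' \ B) ∩ P) ∪ ((B' \ B) ∩ Ng) := by
    rw [← Set.inter_union_distrib_left, hPN, Set.inter_univ]
  -- disjointness
  have d1 : Disjoint ((B ∩ B') ∩ P) ((B \ B') ∩ P) :=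
    Set.disjoint_left.mpr (fun x hx hx' => hx'.1.2 hx.1.2)
  have d2 : Disjoint ((B ∩ B') ∩ P) ((B' \ B) ∩ P) :=
    Set.disjoint_left.mpr (fun x hx hx' => hx'.1.2 hx.1.1)
  have d3 : Disjoint (Ng \ (B ∪ B')) ((B' \ B) ∩ Ng) :=
    Set.disjoint_left.mpr (fun x hx hx' => hx.2 (Or.inr hx'.1.1))
  have d4 : Disjoint (Ng \ (B ∪ B')) ((B \ B') ∩ Ng) :=
    Set.disjoint_left.mpr (fun x hx hx' => hx.2 (Or.inl hx'.1.1))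
  have d5 : Disjoint ((B \ B') ∩ P) ((B \ B') ∩ Ng) :=
    Set.disjoint_left.mpr (fun x hx hx' => (not_lt.mpr (show (0:ℤ) ≤ x from hx.2)) (show x < 0 from hx'.2))
  have d6 : Disjoint ((B' \ B) ∩ P) ((B' \ B) ∩ Ng) :=
    Set.disjoint_left.mpr (fun x hx hx' => (not_lt.mpr (show (0:ℤ) ≤ x from hx.2)) (show x < 0 from hx'.2))
  have g1 : ∑ᶠ x ∈ B ∩ P, (x + 1 : ℤ)
      = (∑ᶠ x ∈ (B ∩ B') ∩ P, (x + 1 : ℤ)) + ∑ᶠ x ∈ (B \ B') ∩ P, (x + 1 : ℤ) := by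
    rw [E1, finsum_mem_union d1 fC f1P]
  have g2 : ∑ᶠ x ∈ B' ∩ P, (x + 1 : ℤ)
      = (∑ᶠ x ∈ (B ∩ B') ∩ P, (x + 1 : ℤ)) + ∑ᶠ x ∈ (B' \ B) ∩ P, (x + 1 : ℤ) := by
    rw [E2, finsum_mem_union d2 fC f2P]
  have g3 : ∑ᶠ x ∈ Ng \ B, (-x - 1 : ℤ)
      = (∑ᶠ x ∈ Ng \ (B ∪ B'), (-x - 1 : ℤ)) + ∑ᶠ x ∈ (B' \ B) ∩ Ng, (-x - 1 : ℤ) := by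
    rw [E3, finsum_mem_union d3 fU f2N]
  have g4 : ∑ᶠ x ∈ Ng \ B', (-x - 1 : ℤ)
      = (∑ᶠ x ∈ Ng \ (B ∪ B'), (-x - 1 : ℤ)) + ∑ᶠ x ∈ (B \ B') ∩ Ng, (-x - 1 : ℤ) := by
    rw [E4, finsum_mem_union d4 fU f1N]
  have g5 : ∑ᶠ x ∈ B \ B', (x + 1 : ℤ)
      = (∑ᶠ x ∈ (B \ B') ∩ P, (x + 1 : ℤ)) + ∑ᶠ x ∈ (B \ B') ∩ Ng, (x + 1 : ℤ) := by
    conv_lhs => rw [E5]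
    rw [finsum_mem_union d5 f1P f1N]
  have g6 : ∑ᶠ x ∈ B' \ B, (x + 1 : ℤ)
      = (∑ᶠ x ∈ (B' \ B) ∩ P, (x + 1 : ℤ)) + ∑ᶠ x ∈ (B' \ B) ∩ Ng, (x + 1 : ℤ) := by
    conv_lhs => rw [E6]
    rw [finsum_mem_union d6 f2P f2N]
  have g7 := neg_fsum _ f1N
  have g8 := neg_fsum _ f2N
  rw [Gfun, Gfun, ← hP, ← hNg, g1, g2, g3, g4, g5, g6]
  linarith [g7, g8]

lemma sdiff' (B B' : Set ℤ) (hB : IsBetaSet B) (hB' : IsBetaSet B')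
    (h1 : (B \ B').Finite) (h2 : (B' \ B).Finite) :
    sInv B - sInv B' = ((B \ B').ncard : ℤ) - ((B' \ B).ncard : ℤ) := by
  set P : Set ℤ := {x : ℤ | 0 ≤ x} with hP
  set Ng : Set ℤ := {x : ℤ | x < 0} with hNg
  have hsplit : ∀ x : ℤ, x ∈ P ∨ x ∈ Ng := fun x => by
    rcases le_or_gt 0 x with h | h
    · exact Or.inl h
    · exact Or.inr h
  have fC : ((B ∩ B') ∩ P).Finite := hB.1.subset (by intro x hx; exact ⟨hx.1.1, hx.2⟩)
  have f1P : ((B \ B') ∩ P).Finite := hB.1.subset (by intro x hx; exact ⟨hx.1.1, hx.2⟩)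
  have f2P : ((B' \ B) ∩ P).Finite := hB'.1.subset (by intro x hx; exact ⟨hx.1.1, hx.2⟩)
  have fU : (Ng \ (B ∪ B')).Finite := hB.2.subset (fun x hx => ⟨hx.1, fun h => hx.2 (Or.inl h)⟩)
  have f1N : ((B \ B') ∩ Ng).Finite := hB'.2.subset (fun x hx => ⟨hx.2, hx.1.2⟩)
  have f2N : ((B' \ B) ∩ Ng).Finite := hB.2.subset (fun x hx => ⟨hx.2, hx.1.2⟩)
  have E1 : B ∩ P = ((B ∩ B') ∩ P) ∪ ((B \ B') ∩ P) := by
    ext x; by_cases hx : x ∈ B' <;> simp [Set.mem_inter_iff, Set.mem_diff, hx] <;> tauto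
  have E2 : B' ∩ P = ((B ∩ B') ∩ P) ∪ ((B' \ B) ∩ P) := by
    ext x; by_cases hx : x ∈ B <;> simp [Set.mem_inter_iff, Set.mem_diff, hx] <;> tauto
  have E3 : Ng \ B = (Ng \ (B ∪ B')) ∪ ((B' \ B) ∩ Ng) := by
    ext x; by_cases hx : x ∈ B' <;> simp [Set.mem_diff, Set.mem_inter_iff, hx] <;> tauto
  have E4 : Ng \ B' = (Ng \ (B ∪ B')) ∪ ((B \ B') ∩ Ng) := by
    ext x; by_cases hx : x ∈ B <;> simp [Set.mem_diff, Set.mem_inter_iff, hx] <;> tauto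
  have hPN : P ∪ Ng = Set.univ := by
    ext x; simp only [Set.mem_union, Set.mem_univ, iff_true, hP, hNg, Set.mem_setOf_eq]
    exact le_or_gt 0 x
  have E5 : B \ B' = ((B \ B') ∩ P) ∪ ((B \ B') ∩ Ng) := by
    rw [← Set.inter_union_distrib_left, hPN, Set.inter_univ]
  have E6 : B' \ B = ((B' \ B) ∩ P) ∪ ((B' \ B) ∩ Ng) := by
    rw [← Set.inter_union_distrib_left, hPN, Set.inter_univ]
  have d1 : Disjoint ((B ∩ B') ∩ P) ((B \ B') ∩ P) :=
    Set.disjoint_left.mpr (fun x hx hx' => hx'.1.2 hx.1.2)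
  have d2 : Disjoint ((B ∩ B') ∩ P) ((B' \ B) ∩ P) :=
    Set.disjoint_left.mpr (fun x hx hx' => hx'.1.2 hx.1.1)
  have d3 : Disjoint (Ng \ (B ∪ B')) ((B' \ B) ∩ Ng) :=
    Set.disjoint_left.mpr (fun x hx hx' => hx.2 (Or.inr hx'.1.1))
  have d4 : Disjoint (Ng \ (B ∪ B')) ((B \ B') ∩ Ng) :=
    Set.disjoint_left.mpr (fun x hx hx' => hx.2 (Or.inl hx'.1.1))
  have d5 : Disjoint ((B \ B') ∩ P) ((B \ B') ∩ Ng) :=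
    Set.disjoint_left.mpr (fun x hx hx' => (not_lt.mpr (show (0:ℤ) ≤ x from hx.2)) (show x < 0 from hx'.2))
  have d6 : Disjoint ((B' \ B) ∩ P) ((B' \ B) ∩ Ng) :=
    Set.disjoint_left.mpr (fun x hx hx' => (not_lt.mpr (show (0:ℤ) ≤ x from hx.2)) (show x < 0 from hx'.2))
  have g1 : (B ∩ P).ncard = ((B ∩ B') ∩ P).ncard + ((B \ B') ∩ P).ncard := by
    rw [E1, Set.ncard_union_eq d1 fC f1P]
  have g2 : (B' ∩ P).ncard = ((B ∩ B') ∩ P).ncard + ((B' \ B) ∩ P).ncard := by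
    rw [E2, Set.ncard_union_eq d2 fC f2P]
  have g3 : (Ng \ B).ncard = (Ng \ (B ∪ B')).ncard + ((B' \ B) ∩ Ng).ncard := by
    rw [E3, Set.ncard_union_eq d3 fU f2N]
  have g4 : (Ng \ B').ncard = (Ng \ (B ∪ B')).ncard + ((B \ B') ∩ Ng).ncard := by
    rw [E4, Set.ncard_union_eq d4 fU f1N]
  have g5 : (B \ B').ncard = ((B \ B') ∩ P).ncard + ((B \ B') ∩ Ng).ncard := by
    conv_lhs => rw [E5]
    rw [Set.ncard_union_eq d5 f1P f1N]
  have g6 : (B' \ B).ncard = ((B' \ B) ∩ P).ncard + ((B' \ B) ∩ Ng).ncard := by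
    conv_lhs => rw [E6]
    rw [Set.ncard_union_eq d6 f2P f2N]
  rw [sInv, sInv, ← hP, ← hNg, g1, g2, g3, g4, g5, g6]
  push_cast
  ring

end AuxStatement12
section AuxWindows

variable {r : ℕ} (nn : Fin r → ℕ)

/-- lower end of window `p` -/
def wlo (p : ℤ × Fin r) : ℤ := p.1 * (nTot nn : ℤ) + (sigBefore nn p.2 : ℤ)

/-- the window of `p` -/
def Wset (p : ℤ × Fin r) : Set ℤ := Set.Ico (wlo nn p) (wlo nn p + (nn p.2 : ℤ))

lemma sig_add_le (j : Fin r) : sigBefore nn j + nn j ≤ nTot nn := by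
  have h : insert j (Finset.univ.filter (fun k : Fin r => (k : ℕ) < (j : ℕ))) ⊆ Finset.univ :=
    fun x _ => Finset.mem_univ x
  have hj : j ∉ Finset.univ.filter (fun k : Fin r => (k : ℕ) < (j : ℕ)) := by simp
  calc sigBefore nn j + nn j
      = ∑ k ∈ insert j (Finset.univ.filter (fun k : Fin r => (k : ℕ) < (j : ℕ))), nn k := by
        rw [Finset.sum_insert hj, sigBefore]; ring
    _ ≤ nTot nn := Finset.sum_le_sum_of_subset h

lemma sig_mono {j j' : Fin r} (h : (j : ℕ) < (j' : ℕ)) :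
    sigBefore nn j + nn j ≤ sigBefore nn j' := by
  have hsub : insert j (Finset.univ.filter (fun k : Fin r => (k : ℕ) < (j : ℕ)))
      ⊆ Finset.univ.filter (fun k : Fin r => (k : ℕ) < (j' : ℕ)) := by
    intro x hx
    rcases Finset.mem_insert.mp hx with h1 | h1
    · subst h1
      simp only [Finset.mem_filter, Finset.mem_univ, true_and]
      exact h
    · simp only [Finset.mem_filter, Finset.mem_univ, true_and] at h1 ⊢; omega
  have hj : j ∉ Finset.univ.filter (fun k : Fin r => (k : ℕ) < (j : ℕ)) := by simp
  calc sigBefore nn j + nn j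
      = ∑ k ∈ insert j (Finset.univ.filter (fun k : Fin r => (k : ℕ) < (j : ℕ))), nn k := by
        rw [Finset.sum_insert hj, sigBefore]; ring
    _ ≤ sigBefore nn j' := Finset.sum_le_sum_of_subset hsub

lemma sig_succ {j j' : Fin r} (h : (j' : ℕ) = (j : ℕ) + 1) :
    sigBefore nn j' = sigBefore nn j + nn j := by
  have hj : j ∉ Finset.univ.filter (fun k : Fin r => (k : ℕ) < (j : ℕ)) := by simp
  have hset : Finset.univ.filter (fun k : Fin r => (k : ℕ) < (j' : ℕ))
      = insert j (Finset.univ.filter (fun k : Fin r => (k : ℕ) < (j : ℕ))) := by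
    ext x
    simp only [Finset.mem_filter, Finset.mem_univ, true_and, Finset.mem_insert, h]
    constructor
    · intro hx
      rcases Nat.lt_succ_iff_lt_or_eq.mp hx with h1 | h1
      · exact Or.inr h1
      · exact Or.inl (Fin.ext h1)
    · rintro (rfl | hx)
      · omega
      · omega
  rw [sigBefore, hset, Finset.sum_insert hj, sigBefore]; ring

lemma sig_last {j : Fin r} (h : (j : ℕ) + 1 = r) : sigBefore nn j + nn j = nTot nn := by
  have hj : j ∉ Finset.univ.filter (fun k : Fin r => (k : ℕ) < (j : ℕ)) := by simp
  have hset : Finset.univ = insert j (Finset.univ.filter (fun k : Fin r => (k : ℕ) < (j : ℕ))) := by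
    ext x
    simp only [Finset.mem_univ, true_iff, Finset.mem_insert, Finset.mem_filter, true_and]
    have := x.isLt
    by_cases hx : x = j
    · exact Or.inl hx
    · right
      have : (x : ℕ) ≠ (j : ℕ) := fun hc => hx (Fin.ext hc)
      omega
  rw [nTot, hset, Finset.sum_insert hj, sigBefore]; ring

lemma ediv_unique' (a b q : ℤ) (hb : 0 < b) (h1 : q * b ≤ a) (h2 : a < (q + 1) * b) :
    a / b = q := by
  have h3 := Int.mul_ediv_add_emod a b
  have h4 := Int.emod_nonneg a (show b ≠ 0 by omega)
  have h5 := Int.emod_lt_of_pos a hb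
  nlinarith [Int.mul_ediv_add_emod a b]

lemma nTot_pos (hr : 0 < r) (hpos : ∀ j : Fin r, 0 < nn j) : 0 < nTot nn := by
  have : 0 < nn ⟨0, hr⟩ := hpos _
  calc 0 < nn ⟨0, hr⟩ := this
    _ ≤ nTot nn := Finset.single_le_sum (fun k _ => Nat.zero_le (nn k)) (Finset.mem_univ _)

lemma window_unique (hr : 0 < r) (hpos : ∀ j : Fin r, 0 < nn j) {x : ℤ} {p q : ℤ × Fin r}
    (hp : x ∈ Wset nn p) (hq : x ∈ Wset nn q) : p = q := by
  have hN : (0 : ℤ) < (nTot nn : ℤ) := by exact_mod_cast nTot_pos nn hr hpos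
  obtain ⟨hp1, hp2⟩ := hp
  obtain ⟨hq1, hq2⟩ := hq
  rw [wlo] at hp1 hp2 hq1 hq2
  have hsp : (0 : ℤ) ≤ (sigBefore nn p.2 : ℤ) := Int.natCast_nonneg _
  have hsq : (0 : ℤ) ≤ (sigBefore nn q.2 : ℤ) := Int.natCast_nonneg _
  have hap : (sigBefore nn p.2 : ℤ) + (nn p.2 : ℤ) ≤ (nTot nn : ℤ) := by
    exact_mod_cast sig_add_le nn p.2
  have haq : (sigBefore nn q.2 : ℤ) + (nn q.2 : ℤ) ≤ (nTot nn : ℤ) := by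
    exact_mod_cast sig_add_le nn q.2
  have h1 : x / (nTot nn : ℤ) = p.1 :=
    ediv_unique' x _ p.1 hN (by linarith) (by rw [add_mul]; linarith)
  have h2 : x / (nTot nn : ℤ) = q.1 :=
    ediv_unique' x _ q.1 hN (by linarith) (by rw [add_mul]; linarith)
  have hi : p.1 = q.1 := by rw [← h1, ← h2]
  have hj : p.2 = q.2 := by
    by_contra hne
    have hne' : (p.2 : ℕ) ≠ (q.2 : ℕ) := fun hc => hne (Fin.ext hc)
    rcases Nat.lt_or_ge (p.2 : ℕ) (q.2 : ℕ) with h | h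
    · have := sig_mono nn h
      have : (sigBefore nn p.2 : ℤ) + (nn p.2 : ℤ) ≤ (sigBefore nn q.2 : ℤ) := by
        exact_mod_cast this
      rw [hi] at hp2
      linarith
    · have hlt : (q.2 : ℕ) < (p.2 : ℕ) := by omega
      have := sig_mono nn hlt
      have : (sigBefore nn q.2 : ℤ) + (nn q.2 : ℤ) ≤ (sigBefore nn p.2 : ℤ) := by
        exact_mod_cast this
      rw [hi] at hp1
      linarith
  exact Prod.ext hi hj

lemma exists_window (hr : 0 < r) (hpos : ∀ j : Fin r, 0 < nn j) (x : ℤ) :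
    ∃ p : ℤ × Fin r, x ∈ Wset nn p := by
  have hN : (0 : ℤ) < (nTot nn : ℤ) := by exact_mod_cast nTot_pos nn hr hpos
  set q : ℤ := x % (nTot nn : ℤ) with hqdef
  have hq0 : 0 ≤ q := Int.emod_nonneg x (by omega)
  have hqN : q < (nTot nn : ℤ) := Int.emod_lt_of_pos x hN
  have hx : (nTot nn : ℤ) * (x / (nTot nn : ℤ)) + q = x := Int.mul_ediv_add_emod x _
  have hzero : sigBefore nn ⟨0, hr⟩ = 0 := by
    rw [sigBefore]
    apply Finset.sum_eq_zero
    intro k hk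
    simp at hk
  set S : Finset (Fin r) := Finset.univ.filter (fun j : Fin r => (sigBefore nn j : ℤ) ≤ q) with hS
  have hSne : S.Nonempty := ⟨⟨0, hr⟩, by simp [hS, hzero, hq0]⟩
  set j : Fin r := S.max' hSne with hj
  have hjmem : j ∈ S := S.max'_mem hSne
  have hjle : (sigBefore nn j : ℤ) ≤ q := by
    simp only [hS, Finset.mem_filter] at hjmem; exact hjmem.2
  have hjub : q < (sigBefore nn j : ℤ) + (nn j : ℤ) := by
    by_contra hcon
    push_neg at hcon
    by_cases hlast : (j : ℕ) + 1 = r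
    · have := sig_last nn hlast
      have : (sigBefore nn j : ℤ) + (nn j : ℤ) = (nTot nn : ℤ) := by exact_mod_cast this
      linarith
    · have hlt : (j : ℕ) + 1 < r := Nat.lt_of_le_of_ne j.isLt hlast
      set j' : Fin r := ⟨(j : ℕ) + 1, hlt⟩ with hj'
      have hs : sigBefore nn j' = sigBefore nn j + nn j := sig_succ nn rfl
      have hmem : j' ∈ S := by
        simp only [hS, Finset.mem_filter, Finset.mem_univ, true_and]
        rw [hs]; push_cast; linarith
      have := S.le_max' j' hmem
      rw [← hj] at this
      have : (j' : ℕ) ≤ (j : ℕ) := this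
      simp [hj'] at this
  refine ⟨(x / (nTot nn : ℤ), j), ?_, ?_⟩ <;> rw [wlo] <;> simp only
  · linarith [hx, hjle]
  · linarith [hx, hjub]

end AuxWindows
section AuxBt

variable {r : ℕ} (nn : Fin r → ℕ)

lemma ncard_Ico (a b : ℤ) : (Set.Ico a b).ncard = (b - a).toNat := by
  rw [← Finset.coe_Ico, Set.ncard_coe_finset, Int.card_Ico]

lemma Xset_eq_image (B : Set ℤ) (i : ℤ) (j : Fin r) :
    Xset nn B i j = (fun x => x - wlo nn (i, j)) '' (B ∩ Wset nn (i, j)) := by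
  ext y
  simp only [Xset, Set.mem_setOf_eq, Set.mem_image, Set.mem_inter_iff, Wset, Set.mem_Ico, wlo]
  constructor
  · rintro ⟨x, hxB, h1, h2, rfl⟩
    exact ⟨x, ⟨hxB, by linarith, by linarith⟩, by ring⟩
  · rintro ⟨x, ⟨hxB, h1, h2⟩, rfl⟩
    exact ⟨x, hxB, by linarith, by linarith, by ring⟩

lemma card_window (B : Set ℤ) (p : ℤ × Fin r) :
    (B ∩ Wset nn p).ncard = tfun nn B p := by
  rw [tfun]
  have : Xset nn B p.1 p.2 = (fun x => x - wlo nn (p.1, p.2)) '' (B ∩ Wset nn (p.1, p.2)) :=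
    Xset_eq_image nn B p.1 p.2
  rw [this]
  rw [Set.ncard_image_of_injective _ (fun a b h => by simpa using h)]

lemma window_finite (B : Set ℤ) (p : ℤ × Fin r) : (B ∩ Wset nn p).Finite :=
  (Set.finite_Ico _ _).subset Set.inter_subset_right

lemma Bt_window (t : ℤ × Fin r → ℕ) (hr : 0 < r) (hpos : ∀ j : Fin r, 0 < nn j)
    (ht1 : ∀ p : ℤ × Fin r, t p ≤ nn p.2) (p : ℤ × Fin r) :
    Bt nn t ∩ Wset nn p = Set.Ico (wlo nn p) (wlo nn p + (t p : ℤ)) := by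
  ext x
  simp only [Set.mem_inter_iff, Bt, Set.mem_setOf_eq, Set.mem_Ico]
  constructor
  · rintro ⟨⟨i, j, h1, h2⟩, hw⟩
    have hx : x ∈ Wset nn (i, j) := by
      refine ⟨by rw [wlo]; exact h1, ?_⟩
      rw [wlo]
      have : (t (i, j) : ℤ) ≤ (nn j : ℤ) := by exact_mod_cast ht1 (i, j)
      simp only
      linarith
    have heq : (i, j) = p := window_unique nn hr hpos hx hw
    rw [wlo, ← heq]
    exact ⟨h1, h2⟩
  · rintro ⟨h1, h2⟩
    rw [wlo] at h1 h2
    constructor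
    · exact ⟨p.1, p.2, h1, h2⟩
    · refine ⟨by rw [wlo]; exact h1, ?_⟩
      rw [wlo]
      have : (t p : ℤ) ≤ (nn p.2 : ℤ) := by exact_mod_cast ht1 p
      linarith

lemma tfun_Bt (t : ℤ × Fin r → ℕ) (hr : 0 < r) (hpos : ∀ j : Fin r, 0 < nn j)
    (ht1 : ∀ p : ℤ × Fin r, t p ≤ nn p.2) : tfun nn (Bt nn t) = t := by
  funext p
  rw [← card_window nn (Bt nn t) p, Bt_window nn t hr hpos ht1 p, ncard_Ico]
  omega

lemma isBeta_Bt (t : ℤ × Fin r → ℕ) (hr : 0 < r) (hpos : ∀ j : Fin r, 0 < nn j)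
    (ht : memT nn t) : IsBetaSet (Bt nn t) := by
  have hN : (0 : ℤ) < (nTot nn : ℤ) := by exact_mod_cast nTot_pos nn hr hpos
  constructor
  · -- positive part
    apply Set.Finite.subset (Set.Finite.biUnion ht.2.1
      (fun p _ => Set.finite_Ico (wlo nn p) (wlo nn p + (t p : ℤ))))
    rintro x ⟨⟨i, j, h1, h2⟩, hx0⟩
    have hx0 : (0 : ℤ) ≤ x := hx0
    have hsv : (0 : ℤ) ≤ (sigBefore nn j : ℤ) := Int.natCast_nonneg _
    have hsl : (sigBefore nn j : ℤ) + (t (i, j) : ℤ) ≤ (nTot nn : ℤ) := by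
      have h1' := sig_add_le nn j
      have h2' := ht.1 (i, j)
      push_cast
      have : (t (i,j) : ℤ) ≤ (nn j : ℤ) := by exact_mod_cast h2'
      have : (sigBefore nn j : ℤ) + (nn j : ℤ) ≤ (nTot nn : ℤ) := by exact_mod_cast h1'
      omega
    have hi : 0 ≤ i := by
      by_contra hcon
      push_neg at hcon
      have : i + 1 ≤ 0 := by omega
      have : (i + 1) * (nTot nn : ℤ) ≤ 0 := mul_nonpos_of_nonpos_of_nonneg this (le_of_lt hN)
      have hlt : x < (i + 1) * (nTot nn : ℤ) := by rw [add_mul]; linarith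
      linarith
    have htne : t (i, j) ≠ 0 := by
      intro hz
      rw [hz] at h2
      simp at h2
      linarith
    refine Set.mem_biUnion (show (i, j) ∈ {p : ℤ × Fin r | 0 ≤ p.1 ∧ t p ≠ 0} from ⟨hi, htne⟩) ?_
    exact ⟨by rw [wlo]; exact h1, by rw [wlo]; exact h2⟩
  · -- negative part
    apply Set.Finite.subset (Set.Finite.biUnion ht.2.2
      (fun p _ => Set.finite_Ico (wlo nn p) (wlo nn p + (nn p.2 : ℤ))))
    rintro x ⟨hx0, hxB⟩
    have hx0 : x < 0 := hx0
    obtain ⟨p, hp⟩ := exists_window nn hr hpos x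
    have hsv : (0 : ℤ) ≤ (sigBefore nn p.2 : ℤ) := Int.natCast_nonneg _
    have hi : p.1 < 0 := by
      by_contra hcon
      push_neg at hcon
      have : 0 ≤ p.1 * (nTot nn : ℤ) := mul_nonneg hcon (le_of_lt hN)
      have := hp.1
      rw [wlo] at this
      linarith
    have htne : t p ≠ nn p.2 := by
      intro heq
      apply hxB
      have : x ∈ Set.Ico (wlo nn p) (wlo nn p + (t p : ℤ)) := by
        rw [heq]
        exact hp
      exact ⟨p.1, p.2, by rw [wlo] at this; exact this.1, by rw [wlo] at this; exact this.2⟩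
    exact Set.mem_biUnion (show p ∈ {p : ℤ × Fin r | p.1 < 0 ∧ t p ≠ nn p.2} from ⟨hi, htne⟩) hp

end AuxBt
section AuxSeg

lemma icc_subset_of_closed (a : ℤ) (S : Finset ℤ)
    (hcl : ∀ x ∈ S, a < x → x - 1 ∈ S) :
    ∀ d : ℕ, ∀ x ∈ S, ∀ y : ℤ, a ≤ y → x - y = (d : ℤ) → y ∈ S := by
  intro d
  induction d with
  | zero => intro x hx y _ hd; have : y = x := by omega
            rw [this]; exact hx
  | succ k ih =>
    intro x hx y hay hd
    have hax : a < x := by push_cast at hd; omega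
    have hx1 : x - 1 ∈ S := hcl x hx hax
    exact ih (x - 1) hx1 y hay (by push_cast at hd ⊢; omega)

lemma segmin (a : ℤ) : ∀ (w : ℕ) (S : Finset ℤ), (∀ x ∈ S, a ≤ x) →
    (∑ x ∈ S, (x - a)) = (w : ℤ) →
    ((∑ x ∈ Finset.Ico a (a + (S.card : ℤ)), x) ≤ ∑ x ∈ S, x) ∧
    (S ≠ Finset.Ico a (a + (S.card : ℤ)) →
      (∑ x ∈ Finset.Ico a (a + (S.card : ℤ)), x) < ∑ x ∈ S, x) := by
  intro w
  induction w using Nat.strong_induction_on with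
  | _ w ih =>
    intro S hS hsum
    rcases eq_or_ne S (Finset.Ico a (a + (S.card : ℤ))) with heq | hne
    · constructor
      · conv_lhs => rw [← heq]
      · intro h; exact absurd heq h
    · -- find a gap
      have hgap : ∃ x ∈ S, a < x ∧ x - 1 ∉ S := by
        by_contra hcon
        push_neg at hcon
        have hcl : ∀ x ∈ S, a < x → x - 1 ∈ S := fun x hx hax => hcon x hx hax
        apply hne
        have hsub : S ⊆ Finset.Ico a (a + (S.card : ℤ)) := by
          intro x hx
          rw [Finset.mem_Ico]
          refine ⟨hS x hx, ?_⟩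
          have hicc : Finset.Icc a x ⊆ S := by
            intro y hy
            rw [Finset.mem_Icc] at hy
            exact icc_subset_of_closed a S hcl (x - y).toNat x hx y hy.1
              (by omega)
          have hcard := Finset.card_le_card hicc
          rw [Int.card_Icc] at hcard
          omega
        apply Finset.eq_of_subset_of_card_le hsub
        rw [Int.card_Ico]
        omega
      obtain ⟨x, hxS, hax, hx1⟩ := hgap
      set S' : Finset ℤ := insert (x - 1) (S.erase x) with hS'
      have hx1e : x - 1 ∉ S.erase x := fun h => hx1 (Finset.mem_of_mem_erase h)
      have hcard' : S'.card = S.card := by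
        rw [hS', Finset.card_insert_of_notMem hx1e, Finset.card_erase_of_mem hxS]
        have : 0 < S.card := Finset.card_pos.mpr ⟨x, hxS⟩
        omega
      have hS'lb : ∀ y ∈ S', a ≤ y := by
        intro y hy
        rcases Finset.mem_insert.mp hy with rfl | hy
        · omega
        · exact hS y (Finset.mem_of_mem_erase hy)
      have hsum' : ∀ f : ℤ → ℤ, ∑ y ∈ S', f y = ∑ y ∈ S, f y - f x + f (x - 1) := by
        intro f
        rw [hS', Finset.sum_insert hx1e, ← Finset.sum_erase_add S f hxS]
        ring
      have hw1 : 1 ≤ (w : ℤ) := by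
        rw [← hsum]
        calc (1 : ℤ) ≤ x - a := by omega
          _ ≤ ∑ y ∈ S, (y - a) :=
            Finset.single_le_sum (fun y hy => sub_nonneg.mpr (hS y hy)) hxS
      have hsumS' : ∑ y ∈ S', (y - a) = ((w - 1 : ℕ) : ℤ) := by
        rw [hsum' (fun y => y - a), hsum]
        push_cast
        omega
      have hlt : w - 1 < w := by omega
      obtain ⟨hle', _⟩ := ih (w - 1) hlt S' hS'lb hsumS'
      have hsx : ∑ y ∈ S', y = (∑ y ∈ S, y) - 1 := by
        rw [hsum' (fun y => y)]; ring
      rw [hcard'] at hle'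
      constructor
      · omega
      · intro _
        omega

end AuxSeg
section AuxPartition

lemma wt_eq (lam : SeqPartition) (N : ℕ) (hvan : ∀ k, N ≤ k → lam.parts k = 0) :
    wt lam = ∑ i ∈ Finset.range N, lam.parts i := by
  classical
  set F : Finset (ℕ × ℕ) := (Finset.range N).biUnion
    (fun i => (Finset.range (lam.parts i)).image (fun j => (i + 1, j + 1))) with hF
  have hset : diagram lam = ↑F := by
    ext ⟨p1, p2⟩
    simp only [diagram, Set.mem_setOf_eq, hF, Finset.coe_biUnion, Finset.coe_image,
      Finset.coe_range, Set.mem_iUnion, Set.mem_image, Set.mem_Iio, Prod.mk.injEq]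
    constructor
    · rintro ⟨h1, h2, h3⟩
      have hiN : p1 - 1 < N := by
        by_contra hcon
        push_neg at hcon
        rw [hvan _ hcon] at h3
        omega
      exact ⟨p1 - 1, hiN, p2 - 1, by omega, by omega, by omega⟩
    · rintro ⟨i, hi, j, hj, h1, h2⟩
      refine ⟨by omega, by omega, ?_⟩
      have : p1 - 1 = i := by omega
      rw [this]
      omega
  rw [wt, hset, Set.ncard_coe_finset, hF]
  rw [Finset.card_biUnion]
  · apply Finset.sum_congr rfl
    intro i _
    rw [Finset.card_image_of_injective _ (fun a b h => by
      simp only [Prod.mk.injEq] at h; omega)]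
    exact Finset.card_range _
  · intro i _ i' _ hne
    rw [Function.onFun, Finset.disjoint_left]
    intro p hp hp'
    simp only [Finset.mem_image, Finset.mem_range] at hp hp'
    obtain ⟨j, _, rfl⟩ := hp
    obtain ⟨j', _, hj'⟩ := hp'
    simp only [Prod.mk.injEq] at hj'
    apply hne
    omega

lemma betaSet_eq_range (P : SeqPartition) (s : ℤ) :
    betaSet P s = Set.range (fun i : ℕ => (P.parts i : ℤ) + s - ((i : ℤ) + 1)) := by
  ext x
  simp only [betaSet, Set.mem_setOf_eq, Set.mem_range]
  exact ⟨fun ⟨i, hi⟩ => ⟨i, hi.symm⟩, fun ⟨i, hi⟩ => ⟨i, hi.symm⟩⟩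

lemma e_lower (s : ℤ) (e : ℕ → ℤ) (he : StrictAnti e) (N : ℕ)
    (hN : ∀ i, N ≤ i → e i = s - 1 - i) : ∀ i, s - 1 - i ≤ e i := by
  have key : ∀ k i : ℕ, N ≤ i + k → s - 1 - i ≤ e i := by
    intro k
    induction k with
    | zero => intro i hi; rw [hN i (by omega)]
    | succ m ih =>
      intro i hi
      by_cases hc : N ≤ i + m
      · exact ih i hc
      · have h1 : e (i + 1) < e i := he (by omega)
        have h2 : s - 1 - (i + 1 : ℕ) ≤ e (i + 1) := ih (i + 1) (by omega)
        push_cast at h2 ⊢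
        omega
  intro i
  exact key N i (by omega)

lemma rangeE_isBeta (s : ℤ) (e : ℕ → ℤ) (he : StrictAnti e) (N : ℕ)
    (hN : ∀ i, N ≤ i → e i = s - 1 - i) : IsBetaSet (Set.range e) := by
  constructor
  · apply Set.Finite.subset ((Set.finite_Iio (max N s.toNat)).image e)
    rintro x ⟨⟨i, rfl⟩, hx⟩
    have hx : (0 : ℤ) ≤ e i := hx
    refine ⟨i, ?_, rfl⟩
    simp only [Set.mem_Iio]
    by_contra hcon
    push_neg at hcon
    have h1 : N ≤ i := le_trans (le_max_left _ _) hcon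
    have h2 : s.toNat ≤ i := le_trans (le_max_right _ _) hcon
    have h3 : s ≤ (i : ℤ) := le_trans (Int.self_le_toNat s) (by exact_mod_cast h2)
    rw [hN i h1] at hx
    omega
  · apply Set.Finite.subset (Set.finite_Ico (s - (N : ℤ)) 0)
    rintro x ⟨hx0, hxr⟩
    have hx0 : x < 0 := hx0
    simp only [Set.mem_Ico]
    refine ⟨?_, hx0⟩
    by_contra hcon
    push_neg at hcon
    apply hxr
    have hge : (N : ℤ) ≤ s - 1 - x := by omega
    have htn : ((s - 1 - x).toNat : ℤ) = s - 1 - x := by omega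
    refine ⟨(s - 1 - x).toNat, ?_⟩
    rw [hN _ (by omega), htn]
    omega

lemma range_std (s : ℤ) (e : ℕ → ℤ) (hall : ∀ i, e i = s - 1 - i) :
    Set.range e = {x : ℤ | x < s} := by
  ext x
  simp only [Set.mem_range, Set.mem_setOf_eq]
  constructor
  · rintro ⟨i, rfl⟩
    rw [hall i]
    have : (0 : ℤ) ≤ i := Int.natCast_nonneg i
    omega
  · intro hx
    refine ⟨(s - 1 - x).toNat, ?_⟩
    rw [hall]
    omega

lemma Gfun_range (s : ℤ) : ∀ (w : ℕ) (e : ℕ → ℤ), StrictAnti e → ∀ (N : ℕ),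
    (∀ i, N ≤ i → e i = s - 1 - i) →
    (∑ i ∈ Finset.range N, (e i - (s - 1 - i)) = (w : ℤ)) →
    Gfun (Set.range e) = Gfun {x : ℤ | x < s} + w := by
  intro w
  induction w using Nat.strong_induction_on with
  | _ w ih =>
    intro e he N hN hw
    have hlow := e_lower s e he N hN
    by_cases hc : ∀ i ∈ Finset.range N, e i = s - 1 - i
    · -- all standard: w = 0
      have hall : ∀ i, e i = s - 1 - i := by
        intro i
        by_cases hi : i < N
        · exact hc i (Finset.mem_range.mpr hi)
        · exact hN i (by omega)
      have hw0 : (w : ℤ) = 0 := by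
        rw [← hw]
        apply Finset.sum_eq_zero
        intro i hi
        rw [hc i hi]
        ring
      rw [range_std s e hall]
      omega
    · -- there is a nonstandard row
      push_neg at hc
      set T : Finset ℕ := (Finset.range N).filter (fun i => e i ≠ s - 1 - i) with hT
      have hTne : T.Nonempty := by
        obtain ⟨i, hi, hine⟩ := hc
        exact ⟨i, by simp [hT, Finset.mem_filter, hi, hine]⟩
      set i0 : ℕ := T.max' hTne with hi0
      have hi0mem : i0 ∈ T := T.max'_mem hTne
      have hi0N : i0 < N := Finset.mem_range.mp (Finset.mem_filter.mp hi0mem).1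
      have hi0ne : e i0 ≠ s - 1 - i0 := (Finset.mem_filter.mp hi0mem).2
      have hi0lt : s - 1 - (i0 : ℤ) < e i0 := lt_of_le_of_ne (hlow i0) (Ne.symm hi0ne)
      have hafter : ∀ j, i0 < j → e j = s - 1 - j := by
        intro j hj
        by_cases hjN : N ≤ j
        · exact hN j hjN
        · by_contra hne
          have : j ∈ T := Finset.mem_filter.mpr ⟨Finset.mem_range.mpr (by omega), hne⟩
          have := T.le_max' j this
          omega
      set a : ℤ := e i0 with ha
      set e' : ℕ → ℤ := Function.update e i0 (a - 1) with he'def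
      have he'eq : ∀ j, j ≠ i0 → e' j = e j := fun j hj => Function.update_of_ne hj _ _
      have he'i0 : e' i0 = a - 1 := Function.update_self _ _ _
      have he' : StrictAnti e' := by
        apply strictAnti_nat_of_succ_lt
        intro m
        rcases eq_or_ne m i0 with rfl | hm
        · rw [he'i0, he'eq (i0 + 1) (by omega), hafter (i0 + 1) (by omega)]
          push_cast
          omega
        · rcases eq_or_ne (m + 1) i0 with hm1 | hm1
          · rw [he'eq m hm, hm1, he'i0]
            have : e (m + 1) < e m := he (by omega)
            rw [hm1] at this
            omega
          · rw [he'eq m hm, he'eq (m + 1) hm1]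
            exact he (by omega)
      have hN' : ∀ i, N ≤ i → e' i = s - 1 - i := by
        intro i hi
        rw [he'eq i (by omega)]
        exact hN i hi
      have hw1 : 1 ≤ (w : ℤ) := by
        rw [← hw]
        calc (1 : ℤ) ≤ e i0 - (s - 1 - i0) := by omega
          _ ≤ ∑ i ∈ Finset.range N, (e i - (s - 1 - i)) :=
            Finset.single_le_sum (fun i hi => sub_nonneg.mpr (hlow i))
              (Finset.mem_range.mpr hi0N)
      have hsum' : ∑ i ∈ Finset.range N, (e' i - (s - 1 - i)) = ((w - 1 : ℕ) : ℤ) := by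
        have hmem : i0 ∈ Finset.range N := Finset.mem_range.mpr hi0N
        have h1 := Finset.sum_erase_add (Finset.range N) (fun i => e' i - (s - 1 - i)) hmem
        have h2 := Finset.sum_erase_add (Finset.range N) (fun i => e i - (s - 1 - i)) hmem
        have h3 : ∑ i ∈ (Finset.range N).erase i0, (e' i - (s - 1 - i))
            = ∑ i ∈ (Finset.range N).erase i0, (e i - (s - 1 - i)) := by
          apply Finset.sum_congr rfl
          intro i hi
          rw [he'eq i (Finset.ne_of_mem_erase hi)]
        rw [← h1, h3, he'i0]
        have h4 : ∑ i ∈ (Finset.range N).erase i0, (e i - (s - 1 - i))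
            = (w : ℤ) - (a - (s - 1 - i0)) := by
          rw [← hw, ← h2]
          ring
        rw [h4]
        push_cast
        omega
      have hIH := ih (w - 1) (by omega) e' he' N hN' hsum'
      -- compute difference of Gfun
      have hBbeta : IsBetaSet (Set.range e) := rangeE_isBeta s e he N hN
      have hB'beta : IsBetaSet (Set.range e') := rangeE_isBeta s e' he' N hN'
      have hanotin : a - 1 ∉ Set.range e := by
        rintro ⟨j, hj⟩
        rcases lt_trichotomy j i0 with h | rfl | h
        · have : e i0 < e j := he h
          omega
        · omega
        · have h1 : e j ≤ e (i0 + 1) := he.antitone (by omega)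
          rw [hafter (i0 + 1) (by omega)] at h1
          push_cast at h1
          omega
      have hdiff1 : Set.range e \ Set.range e' = {a} := by
        ext x
        simp only [Set.mem_diff, Set.mem_range, Set.mem_singleton_iff]
        constructor
        · rintro ⟨⟨j, rfl⟩, hx⟩
          rcases eq_or_ne j i0 with rfl | hj
          · rfl
          · exact absurd ⟨j, he'eq j hj⟩ hx
        · rintro rfl
          refine ⟨⟨i0, rfl⟩, ?_⟩
          rintro ⟨j, hj⟩
          rcases eq_or_ne j i0 with rfl | hjne
          · rw [he'i0] at hj; omega
          · rw [he'eq j hjne] at hj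
            exact hjne (he.injective hj)
      have hdiff2 : Set.range e' \ Set.range e = {a - 1} := by
        ext x
        simp only [Set.mem_diff, Set.mem_range, Set.mem_singleton_iff]
        constructor
        · rintro ⟨⟨j, rfl⟩, hx⟩
          rcases eq_or_ne j i0 with rfl | hj
          · rw [he'i0]
          · exact absurd ⟨j, he'eq j hj ▸ rfl⟩ hx
        · rintro rfl
          refine ⟨⟨i0, he'i0⟩, hanotin⟩
      have hGd := Gdiff (Set.range e) (Set.range e') hBbeta hB'beta
        (hdiff1 ▸ Set.finite_singleton a) (hdiff2 ▸ Set.finite_singleton (a - 1))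
      rw [hdiff1, hdiff2, finsum_mem_singleton, finsum_mem_singleton] at hGd
      rw [hIH] at hGd
      have : Gfun (Set.range e) = Gfun {x : ℤ | x < s} + ((w - 1 : ℕ) : ℤ) + 1 := by omega
      rw [this]
      push_cast
      omega

lemma wtG (P : SeqPartition) (s : ℤ) (B : Set ℤ) (hB : betaSet P s = B) :
    Gfun B = Gfun {x : ℤ | x < s} + (wt P : ℤ) := by
  obtain ⟨N, hvan⟩ := P.eventually_zero'
  set e : ℕ → ℤ := fun i => (P.parts i : ℤ) + s - ((i : ℤ) + 1) with he
  have hse : StrictAnti e := by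
    apply strictAnti_nat_of_succ_lt
    intro m
    have := P.antitone' m (m + 1) (by omega)
    simp only [he]
    push_cast
    omega
  have hNe : ∀ i, N ≤ i → e i = s - 1 - i := by
    intro i hi
    simp only [he, hvan i hi]
    push_cast
    ring
  have hwsum : ∑ i ∈ Finset.range N, (e i - (s - 1 - i))
      = ((∑ i ∈ Finset.range N, P.parts i : ℕ) : ℤ) := by
    push_cast
    apply Finset.sum_congr rfl
    intro i _
    simp only [he]
    ring
  have := Gfun_range s (∑ i ∈ Finset.range N, P.parts i) e hse N hNe hwsum
  rw [← hB, betaSet_eq_range, ← he, this, wt_eq P N hvan]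

end AuxPartition
/-- `B_𝐭 ∈ 𝔅_𝐭`, and it is the unique element of `𝔅_𝐭` minimizing
`|Par(−)|`.  (`Par(B)` is encoded by a partition `P` with `β_{𝔰(B)}(P) = B`.) -/
theorem statement12 (n r : ℕ) (hr : 0 < r) (nn : Fin r → ℕ) (hpos : ∀ j : Fin r, 0 < nn j)
    (hsum : nTot nn = n) (t : ℤ × Fin r → ℕ) (ht : memT nn t) :
    (IsBetaSet (Bt nn t) ∧ tfun nn (Bt nn t) = t) ∧
    ∀ B : Set ℤ, IsBetaSet B → tfun nn B = t → B ≠ Bt nn t →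
      ∀ P Pt : SeqPartition, betaSet P (sInv B) = B →
        betaSet Pt (sInv (Bt nn t)) = Bt nn t → wt Pt < wt P := by
  classical
  have hBt : IsBetaSet (Bt nn t) := isBeta_Bt nn t hr hpos ht
  have htfunBt : tfun nn (Bt nn t) = t := tfun_Bt nn t hr hpos ht.1
  refine ⟨⟨hBt, htfunBt⟩, ?_⟩
  intro B hB htB hne P Pt hP hPt
  -- finiteness of differences
  have hd1 : (B \ Bt nn t).Finite := by
    apply Set.Finite.subset (hB.1.union hBt.2)
    rintro x ⟨hxB, hxn⟩
    rcases le_or_gt 0 x with h | h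
    · exact Or.inl ⟨hxB, h⟩
    · exact Or.inr ⟨h, hxn⟩
  have hd2 : (Bt nn t \ B).Finite := by
    apply Set.Finite.subset (hBt.1.union hB.2)
    rintro x ⟨hxB, hxn⟩
    rcases le_or_gt 0 x with h | h
    · exact Or.inl ⟨hxB, h⟩
    · exact Or.inr ⟨h, hxn⟩
  -- per-window facts
  have hcardB : ∀ p, (B ∩ Wset nn p).ncard = t p := fun p => by
    rw [card_window, htB]
  have hcardBt : ∀ p, (Bt nn t ∩ Wset nn p).ncard = t p := fun p => by
    rw [card_window, htfunBt]
  have hBtW : ∀ p, Bt nn t ∩ Wset nn p = Set.Ico (wlo nn p) (wlo nn p + (t p : ℤ)) :=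
    Bt_window nn t hr hpos ht.1
  -- the window index function
  set φ : ℤ → ℤ × Fin r := fun x => Classical.choose (exists_window nn hr hpos x) with hφ
  have hφmem : ∀ x, x ∈ Wset nn (φ x) := fun x => Classical.choose_spec (exists_window nn hr hpos x)
  have hφuniq : ∀ (x : ℤ) (p : ℤ × Fin r), x ∈ Wset nn p → φ x = p := fun x p hx =>
    window_unique nn hr hpos (hφmem x) hx
  -- fiber finsets
  have ffin1 : ∀ p : ℤ × Fin r, ((B \ Bt nn t) ∩ Wset nn p).Finite := fun p =>
    window_finite nn _ p
  have ffin2 : ∀ p : ℤ × Fin r, ((Bt nn t \ B) ∩ Wset nn p).Finite := fun p =>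
    window_finite nn _ p
  have fc : ∀ p : ℤ × Fin r, ((B ∩ Bt nn t) ∩ Wset nn p).Finite := fun p =>
    window_finite nn _ p
  set D1 : Finset ℤ := hd1.toFinset with hD1
  set D2 : Finset ℤ := hd2.toFinset with hD2
  set I : Finset (ℤ × Fin r) := (D1 ∪ D2).image φ with hI
  have hfib1 : ∀ p, D1.filter (fun x => φ x = p) = (ffin1 p).toFinset := by
    intro p
    ext x
    simp only [Finset.mem_filter, hD1, Set.Finite.mem_toFinset, Set.mem_inter_iff]
    constructor
    · rintro ⟨hx, rfl⟩
      exact ⟨hx, hφmem x⟩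
    · rintro ⟨hx, hw⟩
      exact ⟨hx, hφuniq x p hw⟩
  have hfib2 : ∀ p, D2.filter (fun x => φ x = p) = (ffin2 p).toFinset := by
    intro p
    ext x
    simp only [Finset.mem_filter, hD2, Set.Finite.mem_toFinset, Set.mem_inter_iff]
    constructor
    · rintro ⟨hx, rfl⟩
      exact ⟨hx, hφmem x⟩
    · rintro ⟨hx, hw⟩
      exact ⟨hx, hφuniq x p hw⟩
  -- per-window splits
  have hsplitB : ∀ p, (window_finite nn B p).toFinset
      = (ffin1 p).toFinset ∪ (fc p).toFinset := by
    intro p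
    ext x
    simp only [Set.Finite.mem_toFinset, Finset.mem_union, Set.mem_inter_iff, Set.mem_diff]
    by_cases hx : x ∈ Bt nn t <;> tauto
  have hsplitBt : ∀ p, (window_finite nn (Bt nn t) p).toFinset
      = (ffin2 p).toFinset ∪ (fc p).toFinset := by
    intro p
    ext x
    simp only [Set.Finite.mem_toFinset, Finset.mem_union, Set.mem_inter_iff, Set.mem_diff]
    by_cases hx : x ∈ B <;> tauto
  have hdj1 : ∀ p, Disjoint ((ffin1 p).toFinset) ((fc p).toFinset) := by
    intro p
    rw [Finset.disjoint_left]
    intro x hx hx'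
    simp only [Set.Finite.mem_toFinset, Set.mem_inter_iff, Set.mem_diff] at hx hx'
    exact hx.1.2 hx'.1.2
  have hdj2 : ∀ p, Disjoint ((ffin2 p).toFinset) ((fc p).toFinset) := by
    intro p
    rw [Finset.disjoint_left]
    intro x hx hx'
    simp only [Set.Finite.mem_toFinset, Set.mem_inter_iff, Set.mem_diff] at hx hx'
    exact hx.1.2 hx'.1.1
  -- per-window finset cards
  have hcB : ∀ p, (window_finite nn B p).toFinset.card = t p := fun p => by
    rw [← Set.ncard_eq_toFinset_card _ (window_finite nn B p)]
    exact hcardB p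
  have hcBt : ∀ p, (window_finite nn (Bt nn t) p).toFinset.card = t p := fun p => by
    rw [← Set.ncard_eq_toFinset_card _ (window_finite nn (Bt nn t) p)]
    exact hcardBt p
  have hcard1 : ∀ p, (ffin1 p).toFinset.card = (ffin2 p).toFinset.card := by
    intro p
    have e1 := hcB p
    have e2 := hcBt p
    rw [hsplitB p, Finset.card_union_of_disjoint (hdj1 p)] at e1
    rw [hsplitBt p, Finset.card_union_of_disjoint (hdj2 p)] at e2
    omega
  -- per-window sum comparison
  have perp : ∀ p : ℤ × Fin r,
      ((∑ x ∈ (ffin2 p).toFinset, x) ≤ ∑ x ∈ (ffin1 p).toFinset, x) ∧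
      ((B ∩ Wset nn p ≠ Bt nn t ∩ Wset nn p) →
        (∑ x ∈ (ffin2 p).toFinset, x) < ∑ x ∈ (ffin1 p).toFinset, x) := by
    intro p
    set SB : Finset ℤ := (window_finite nn B p).toFinset with hSB
    set SBt : Finset ℤ := (window_finite nn (Bt nn t) p).toFinset with hSBt
    have hSBtIco : SBt = Finset.Ico (wlo nn p) (wlo nn p + (t p : ℤ)) := by
      ext x
      simp only [hSBt, Set.Finite.mem_toFinset, hBtW p, Set.mem_Ico, Finset.mem_Ico]
    have hlb : ∀ x ∈ SB, wlo nn p ≤ x := by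
      intro x hx
      rw [hSB, Set.Finite.mem_toFinset] at hx
      exact hx.2.1
    have hnn : 0 ≤ ∑ x ∈ SB, (x - wlo nn p) :=
      Finset.sum_nonneg (fun x hx => sub_nonneg.mpr (hlb x hx))
    have hw : ∑ x ∈ SB, (x - wlo nn p) = ((∑ x ∈ SB, (x - wlo nn p)).toNat : ℤ) := by
      omega
    obtain ⟨hle, hstrict⟩ := segmin (wlo nn p) (∑ x ∈ SB, (x - wlo nn p)).toNat SB hlb hw
    have hIcoEq : Finset.Ico (wlo nn p) (wlo nn p + (SB.card : ℤ)) = SBt := by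
      rw [hSBtIco, hSB, hcB p]
    rw [hIcoEq] at hle hstrict
    have hsum1 : ∑ x ∈ SB, x = (∑ x ∈ (ffin1 p).toFinset, x) + ∑ x ∈ (fc p).toFinset, x := by
      rw [hSB, hsplitB p, Finset.sum_union (hdj1 p)]
    have hsum2 : ∑ x ∈ SBt, x = (∑ x ∈ (ffin2 p).toFinset, x) + ∑ x ∈ (fc p).toFinset, x := by
      rw [hSBt, hsplitBt p, Finset.sum_union (hdj2 p)]
    constructor
    · linarith [hle, hsum1.symm.le, hsum2.symm.le]
    · intro hnep
      have hSne : SB ≠ SBt := by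
        intro hc
        exact hnep (Set.Finite.toFinset_inj.mp hc)
      have := hstrict hSne
      omega
  -- maps-to facts
  have maps1 : ∀ x ∈ D1, φ x ∈ I := by
    intro x hx
    rw [hI]
    exact Finset.mem_image_of_mem φ (Finset.mem_union_left _ hx)
  have maps2 : ∀ x ∈ D2, φ x ∈ I := by
    intro x hx
    rw [hI]
    exact Finset.mem_image_of_mem φ (Finset.mem_union_right _ hx)
  -- equal cardinalities of the two differences
  have hcardD : D1.card = D2.card := by
    rw [Finset.card_eq_sum_card_fiberwise maps1, Finset.card_eq_sum_card_fiberwise maps2]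
    apply Finset.sum_congr rfl
    intro p _
    rw [hfib1 p, hfib2 p, hcard1 p]
  -- strict sum comparison
  have hsumlt : (∑ x ∈ D2, x) < ∑ x ∈ D1, x := by
    rw [← Finset.sum_fiberwise_of_maps_to maps1 (fun x => x),
      ← Finset.sum_fiberwise_of_maps_to maps2 (fun x => x)]
    obtain ⟨x0, hx0⟩ : ∃ x0, ¬(x0 ∈ B ↔ x0 ∈ Bt nn t) := by
      by_contra hcon
      push_neg at hcon
      exact hne (Set.ext fun x => hcon x)
    have hx0D : x0 ∈ D1 ∪ D2 := by
      rw [hD1, hD2]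
      by_cases hxB : x0 ∈ B
      · apply Finset.mem_union_left
        rw [Set.Finite.mem_toFinset]
        exact ⟨hxB, fun hc => hx0 ⟨fun _ => hc, fun _ => hxB⟩⟩
      · apply Finset.mem_union_right
        rw [Set.Finite.mem_toFinset]
        refine ⟨?_, hxB⟩
        by_contra hc
        exact hx0 ⟨fun h => absurd h hxB, fun h => absurd h hc⟩
    have hp0I : φ x0 ∈ I := by
      rw [hI]
      exact Finset.mem_image_of_mem φ hx0D
    apply Finset.sum_lt_sum
    · intro p _
      rw [hfib1 p, hfib2 p]
      exact (perp p).1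
    · refine ⟨φ x0, hp0I, ?_⟩
      rw [hfib1 (φ x0), hfib2 (φ x0)]
      apply (perp (φ x0)).2
      intro hc
      have hw0 := hφmem x0
      apply hx0
      constructor
      · intro h
        have : x0 ∈ B ∩ Wset nn (φ x0) := ⟨h, hw0⟩
        rw [hc] at this
        exact this.1
      · intro h
        have : x0 ∈ Bt nn t ∩ Wset nn (φ x0) := ⟨h, hw0⟩
        rw [← hc] at this
        exact this.1
  -- conclude equality of sInv
  have hsd := sdiff' B (Bt nn t) hB hBt hd1 hd2
  have hn1 : (B \ Bt nn t).ncard = D1.card := Set.ncard_eq_toFinset_card _ hd1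
  have hn2 : (Bt nn t \ B).ncard = D2.card := Set.ncard_eq_toFinset_card _ hd2
  have hsInv : sInv B = sInv (Bt nn t) := by
    rw [hn1, hn2, hcardD] at hsd
    omega
  -- conclude strict inequality of Gfun
  have hGd := Gdiff B (Bt nn t) hB hBt hd1 hd2
  rw [fsum_eq _ hd1, fsum_eq _ hd2] at hGd
  have hplus : ∀ S : Finset ℤ, ∑ x ∈ S, (x + 1) = (∑ x ∈ S, x) + S.card := by
    intro S
    rw [Finset.sum_add_distrib, Finset.sum_const, nsmul_eq_mul, mul_one]
  rw [hplus, hplus] at hGd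
  have hG : Gfun (Bt nn t) < Gfun B := by
    rw [← hD1, ← hD2] at hGd
    omega
  -- transfer to weights
  have h1 := wtG P (sInv B) B hP
  have h2 := wtG Pt (sInv (Bt nn t)) (Bt nn t) hPt
  rw [hsInv] at h1
  have : (wt Pt : ℤ) < (wt P : ℤ) := by omega
  exact_mod_cast this
end

section
/- Let λ, μ ∈ 𝒫 and s ∈ ℤ. Then 𝚝^𝐧_{β_s(λ)} = 𝚝^𝐧_{β_s(μ)} if and only if λ and μ have the same sets of nodes of n-residue σ_j − s for all j = 0, 1, …, r−1 (i.e. for each such j, {𝔫 ∈ [λ] : 𝔫 has n-residue σ_j − s} = {𝔫 ∈ [μ] : 𝔫 has n-residue σ_j − s}). -/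
open scoped BigOperators

namespace St15

def bfun (lam : SeqPartition) (s : ℤ) (k : ℕ) : ℤ := (lam.parts k : ℤ) + s - (k + 1)

lemma bfun_strictAnti (lam : SeqPartition) (s : ℤ) : StrictAnti (bfun lam s) := by
  apply strictAnti_nat_of_succ_lt
  intro k
  have := lam.antitone' k (k + 1) (Nat.le_succ k)
  simp only [bfun]
  push_cast
  omega

lemma bfun_inj (lam : SeqPartition) (s : ℤ) : Function.Injective (bfun lam s) :=
  (bfun_strictAnti lam s).injective

lemma betaSet_eq_range (lam : SeqPartition) (s : ℤ) :
    betaSet lam s = Set.range (bfun lam s) := by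
  ext x
  simp only [betaSet, Set.mem_setOf_eq, Set.mem_range, bfun]
  constructor
  · rintro ⟨i, h⟩; exact ⟨i, h.symm⟩
  · rintro ⟨i, h⟩; exact ⟨i, h.symm⟩

lemma exists_bfun_lt (lam : SeqPartition) (s : ℤ) (L : ℤ) : ∃ K : ℕ, bfun lam s K < L := by
  obtain ⟨N, hN⟩ := lam.eventually_zero'
  refine ⟨N + (s - L).toNat, ?_⟩
  have h0 : lam.parts (N + (s - L).toNat) = 0 := hN _ (Nat.le_add_right _ _)
  simp only [bfun, h0]
  push_cast
  omega

noncomputable def tailC (lam : SeqPartition) (s : ℤ) (L : ℤ) : ℕ :=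
  Nat.find (exists_bfun_lt lam s L)

lemma le_bfun_iff (lam : SeqPartition) (s : ℤ) (L : ℤ) (k : ℕ) :
    L ≤ bfun lam s k ↔ k < tailC lam s L := by
  rw [tailC, Nat.lt_find_iff]
  constructor
  · intro h m hm
    have := (bfun_strictAnti lam s).antitone hm
    omega
  · intro h
    have := h k le_rfl
    omega

lemma tail_eq_image (lam : SeqPartition) (s : ℤ) (L : ℤ) :
    Set.range (bfun lam s) ∩ Set.Ici L = bfun lam s '' Set.Iio (tailC lam s L) := by
  ext x
  simp only [Set.mem_inter_iff, Set.mem_range, Set.mem_Ici, Set.mem_image, Set.mem_Iio]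
  constructor
  · rintro ⟨⟨k, rfl⟩, hL⟩
    exact ⟨k, (le_bfun_iff lam s L k).1 hL, rfl⟩
  · rintro ⟨k, hk, rfl⟩
    exact ⟨⟨k, rfl⟩, (le_bfun_iff lam s L k).2 hk⟩

lemma tail_finite (lam : SeqPartition) (s : ℤ) (L : ℤ) :
    (Set.range (bfun lam s) ∩ Set.Ici L).Finite := by
  rw [tail_eq_image]; exact (Set.finite_Iio _).image _

lemma ncard_tail (lam : SeqPartition) (s : ℤ) (L : ℤ) :
    (Set.range (bfun lam s) ∩ Set.Ici L).ncard = tailC lam s L := by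
  rw [tail_eq_image, Set.ncard_image_of_injective _ (bfun_inj lam s),
    ← Finset.coe_Iio, Set.ncard_coe_finset, Nat.card_Iio]

lemma tail_split (lam : SeqPartition) (s : ℤ) {L L' : ℤ} (h : L ≤ L') :
    tailC lam s L = (Set.range (bfun lam s) ∩ Set.Ico L L').ncard + tailC lam s L' := by
  have hsplit : Set.range (bfun lam s) ∩ Set.Ici L =
      (Set.range (bfun lam s) ∩ Set.Ico L L') ∪ (Set.range (bfun lam s) ∩ Set.Ici L') := by
    ext x
    simp only [Set.mem_inter_iff, Set.mem_union, Set.mem_Ici, Set.mem_Ico]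
    constructor
    · rintro ⟨hx, hL⟩
      by_cases hc : x < L'
      · exact Or.inl ⟨hx, hL, hc⟩
      · exact Or.inr ⟨hx, by omega⟩
    · rintro (⟨hx, h1, h2⟩ | ⟨hx, h1⟩)
      · exact ⟨hx, h1⟩
      · exact ⟨hx, le_trans h h1⟩
  have hdisj : Disjoint (Set.range (bfun lam s) ∩ Set.Ico L L')
      (Set.range (bfun lam s) ∩ Set.Ici L') := by
    rw [Set.disjoint_left]
    rintro x ⟨-, -, h2⟩ ⟨-, h3⟩
    exact (not_le.mpr h2) h3
  have hf1 : (Set.range (bfun lam s) ∩ Set.Ico L L').Finite := by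
    apply (tail_finite lam s L).subset
    rintro x ⟨hx, h1, h2⟩
    exact ⟨hx, h1⟩
  rw [← ncard_tail lam s L, ← ncard_tail lam s L', hsplit,
    Set.ncard_union_eq hdisj hf1 (tail_finite lam s L')]

lemma Xset_ncard {r : ℕ} (nn : Fin r → ℕ) (B : Set ℤ) (i : ℤ) (j : Fin r) :
    (Xset nn B i j).ncard
      = (B ∩ Set.Ico (i * (nTot nn : ℤ) + (sigBefore nn j : ℤ))
          (i * (nTot nn : ℤ) + (sigBefore nn j : ℤ) + (nn j : ℤ))).ncard := by
  set L := i * (nTot nn : ℤ) + (sigBefore nn j : ℤ) with hL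
  have himg : Xset nn B i j = (fun x => x - L) '' (B ∩ Set.Ico L (L + (nn j : ℤ))) := by
    ext y
    simp only [Xset, Set.mem_setOf_eq, Set.mem_image, Set.mem_inter_iff, Set.mem_Ico]
    constructor
    · rintro ⟨x, hx, h1, h2, rfl⟩
      exact ⟨x, ⟨hx, by omega, by omega⟩, by omega⟩
    · rintro ⟨x, ⟨hx, h1, h2⟩, rfl⟩
      exact ⟨x, hx, by omega, by omega, by omega⟩
  rw [himg, Set.ncard_image_of_injective _ sub_left_injective]

end St15

namespace St15

lemma sig_zero {r : ℕ} (nn : Fin r → ℕ) (j : Fin r) (hj : (j : ℕ) = 0) :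
    sigBefore nn j = 0 := by
  unfold sigBefore
  rw [Finset.filter_eq_empty_iff.mpr (by intro k _; omega), Finset.sum_empty]

lemma sig_succ {r : ℕ} (nn : Fin r → ℕ) (j j' : Fin r) (h : (j' : ℕ) = (j : ℕ) + 1) :
    sigBefore nn j' = sigBefore nn j + nn j := by
  unfold sigBefore
  have hins : Finset.univ.filter (fun k : Fin r => (k : ℕ) < (j' : ℕ))
      = insert j (Finset.univ.filter (fun k : Fin r => (k : ℕ) < (j : ℕ))) := by
    ext k
    simp only [Finset.mem_filter, Finset.mem_insert, Finset.mem_univ, true_and]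
    constructor
    · intro hk
      by_cases hkj : (k : ℕ) = (j : ℕ)
      · exact Or.inl (Fin.ext hkj)
      · exact Or.inr (by omega)
    · rintro (rfl | hk) <;> omega
  rw [hins, Finset.sum_insert (by simp)]
  omega

lemma sig_last {r : ℕ} (nn : Fin r → ℕ) (j : Fin r) (hj : (j : ℕ) = r - 1) :
    sigBefore nn j + nn j = nTot nn := by
  unfold sigBefore nTot
  have he : Finset.univ.filter (fun k : Fin r => (k : ℕ) < (j : ℕ))
      = Finset.univ.erase j := by
    ext k
    simp only [Finset.mem_filter, Finset.mem_erase, Finset.mem_univ, true_and, and_true]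
    have hk := k.isLt
    constructor
    · intro h heq
      rw [heq] at h
      omega
    · intro h
      have : (k : ℕ) ≠ (j : ℕ) := fun hv => h (Fin.ext hv)
      omega
  rw [he, Finset.sum_erase_add _ _ (Finset.mem_univ j)]

lemma emod_toNat_lt {r : ℕ} (hr : 0 < r) (m : ℤ) : (m % (r : ℤ)).toNat < r := by
  have h1 : 0 ≤ m % (r : ℤ) := Int.emod_nonneg m (by exact_mod_cast hr.ne')
  have h2 : m % (r : ℤ) < r := Int.emod_lt_of_pos m (by exact_mod_cast hr)
  omega

def jIdx {r : ℕ} (hr : 0 < r) (m : ℤ) : Fin r := ⟨(m % (r : ℤ)).toNat, emod_toNat_lt hr m⟩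

def Lfun {r : ℕ} (hr : 0 < r) (nn : Fin r → ℕ) (m : ℤ) : ℤ :=
  (m / (r : ℤ)) * (nTot nn : ℤ) + (sigBefore nn (jIdx hr m) : ℤ)

lemma divmod_eq {r : ℕ} (hr : 0 < r) (i : ℤ) (j : Fin r) :
    (i * r + (j : ℕ)) / (r : ℤ) = i ∧ (i * r + (j : ℕ)) % (r : ℤ) = ((j : ℕ) : ℤ) := by
  rw [Int.ediv_emod_unique (by exact_mod_cast hr)]
  refine ⟨by ring, by positivity, by exact_mod_cast j.isLt⟩

lemma jIdx_spec {r : ℕ} (hr : 0 < r) (i : ℤ) (j : Fin r) :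
    jIdx hr (i * r + (j : ℕ)) = j := by
  apply Fin.ext
  show ((i * r + (j : ℕ)) % (r : ℤ)).toNat = (j : ℕ)
  rw [(divmod_eq hr i j).2]
  exact Int.toNat_natCast _

lemma Lfun_spec {r : ℕ} (hr : 0 < r) (nn : Fin r → ℕ) (i : ℤ) (j : Fin r) :
    Lfun hr nn (i * r + (j : ℕ)) = i * (nTot nn : ℤ) + (sigBefore nn j : ℤ) := by
  unfold Lfun
  rw [jIdx_spec hr i j, (divmod_eq hr i j).1]

lemma m_decomp {r : ℕ} (hr : 0 < r) (m : ℤ) :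
    m = (m / (r : ℤ)) * r + ((jIdx hr m : Fin r) : ℕ) := by
  have h1 : 0 ≤ m % (r : ℤ) := Int.emod_nonneg m (by exact_mod_cast hr.ne')
  have h := Int.mul_ediv_add_emod m (r : ℤ)
  show m = m / (r : ℤ) * (r : ℤ) + (((m % (r : ℤ)).toNat : ℕ) : ℤ)
  rw [Int.toNat_of_nonneg h1]
  linarith [h]

lemma Lfun_succ {r : ℕ} (hr : 0 < r) (nn : Fin r → ℕ) (m : ℤ) :
    Lfun hr nn (m + 1) = Lfun hr nn m + (nn (jIdx hr m) : ℤ) := by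
  set q := m / (r : ℤ) with hq
  set j := jIdx hr m with hjdef
  have hm : m = q * r + (j : ℕ) := m_decomp hr m
  have hLm : Lfun hr nn m = q * (nTot nn : ℤ) + (sigBefore nn j : ℤ) := by
    conv_lhs => rw [hm]
    exact Lfun_spec hr nn q j
  by_cases hj : (j : ℕ) + 1 < r
  · have hstep : m + 1 = q * r + ((⟨(j : ℕ) + 1, hj⟩ : Fin r) : ℕ) := by
      rw [hm]; push_cast; ring
    rw [hstep, Lfun_spec hr nn q ⟨(j : ℕ) + 1, hj⟩, hLm,
      sig_succ nn j ⟨(j : ℕ) + 1, hj⟩ rfl]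
    push_cast
    ring
  · have hj2 : ((j : ℕ) : ℤ) + 1 = (r : ℤ) := by
      have := j.isLt
      exact_mod_cast (by omega : (j : ℕ) + 1 = r)
    have hstep : m + 1 = (q + 1) * r + ((⟨0, hr⟩ : Fin r) : ℕ) := by
      rw [hm]; push_cast; linarith [hj2]
    have hlast := sig_last nn j (by have := j.isLt; omega)
    have hlast' : (sigBefore nn j : ℤ) + (nn j : ℤ) = (nTot nn : ℤ) := by
      exact_mod_cast hlast
    rw [hstep, Lfun_spec hr nn (q + 1) ⟨0, hr⟩, hLm, sig_zero nn ⟨0, hr⟩ rfl]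
    push_cast
    linarith [hlast']

lemma Lfun_mono {r : ℕ} (hr : 0 < r) (nn : Fin r → ℕ) : Monotone (Lfun hr nn) := by
  apply monotone_int_of_le_succ
  intro m
  rw [Lfun_succ hr nn m]
  exact le_add_of_nonneg_right (by positivity)

lemma Lfun_mul {r : ℕ} (hr : 0 < r) (nn : Fin r → ℕ) (i : ℤ) :
    Lfun hr nn (i * r) = i * (nTot nn : ℤ) := by
  have h := Lfun_spec hr nn i ⟨0, hr⟩
  simp only [sig_zero nn ⟨0, hr⟩ rfl] at h
  simpa using h

end St15

namespace St15

lemma tfun_iff_tails {r : ℕ} (hr : 0 < r) (nn : Fin r → ℕ) (hn : 0 < nTot nn)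
    (lam mu : SeqPartition) (s : ℤ) :
    tfun nn (betaSet lam s) = tfun nn (betaSet mu s) ↔
      ∀ m : ℤ, tailC lam s (Lfun hr nn m) = tailC mu s (Lfun hr nn m) := by
  have key : ∀ (la : SeqPartition) (i : ℤ) (j : Fin r),
      tfun nn (betaSet la s) (i, j)
        = (Set.range (bfun la s) ∩ Set.Ico (Lfun hr nn (i * r + (j : ℕ)))
            (Lfun hr nn (i * r + (j : ℕ) + 1))).ncard := by
    intro la i j
    show (Xset nn (betaSet la s) i j).ncard = _
    rw [Xset_ncard, betaSet_eq_range, Lfun_succ hr nn, jIdx_spec hr i j, Lfun_spec hr nn i j]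
  have hcount : (tfun nn (betaSet lam s) = tfun nn (betaSet mu s)) ↔
      ∀ m : ℤ, (Set.range (bfun lam s) ∩ Set.Ico (Lfun hr nn m) (Lfun hr nn (m + 1))).ncard
        = (Set.range (bfun mu s) ∩ Set.Ico (Lfun hr nn m) (Lfun hr nn (m + 1))).ncard := by
    constructor
    · intro h m
      have h2 := congrFun h (m / (r : ℤ), jIdx hr m)
      rw [key lam, key mu, ← m_decomp hr m] at h2
      exact h2
    · intro h
      funext p
      obtain ⟨i, j⟩ := p
      rw [key lam, key mu]
      exact h _
  rw [hcount]
  constructor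
  · intro h m
    set T : ℤ := max (bfun lam s 0) (bfun mu s 0) + 1 with hT
    set i0 : ℤ := max T 0 with hi0
    set M : ℤ := max m (i0 * r) with hM
    have hmM : m ≤ M := le_max_left _ _
    have hLM : max (bfun lam s 0) (bfun mu s 0) < Lfun hr nn M := by
      have h1 : Lfun hr nn (i0 * r) = i0 * (nTot nn : ℤ) := Lfun_mul hr nn i0
      have h2 : Lfun hr nn (i0 * r) ≤ Lfun hr nn M := Lfun_mono hr nn (le_max_right _ _)
      have h3 : i0 ≤ i0 * (nTot nn : ℤ) :=
        le_mul_of_one_le_right (le_max_right _ _) (by exact_mod_cast hn)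
      have h4 : T ≤ i0 := le_max_left _ _
      omega
    have htail0 : ∀ la : SeqPartition, bfun la s 0 < Lfun hr nn M →
        tailC la s (Lfun hr nn M) = 0 := by
      intro la hla
      rw [tailC, Nat.find_eq_zero]
      exact hla
    have hzl : tailC lam s (Lfun hr nn M) = 0 := htail0 lam (by omega)
    have hzm : tailC mu s (Lfun hr nn M) = 0 := htail0 mu (by omega)
    have hstep : ∀ d : ℕ,
        tailC lam s (Lfun hr nn (M - d)) = tailC mu s (Lfun hr nn (M - d)) := by
      intro d
      induction d with
      | zero => simpa using hzl.trans hzm.symm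
      | succ d ih =>
        have heq : M - ((d : ℤ) + 1) + 1 = M - d := by ring
        have hle : Lfun hr nn (M - ((d : ℤ) + 1)) ≤ Lfun hr nn (M - ((d : ℤ) + 1) + 1) :=
          Lfun_mono hr nn (by omega)
        have e1 := tail_split lam s hle
        have e2 := tail_split mu s hle
        have hc := h (M - ((d : ℤ) + 1))
        rw [heq] at e1 e2 hc
        have hd1 : ((d : ℤ) + 1) = ((d + 1 : ℕ) : ℤ) := by push_cast; ring
        rw [hd1] at e1 e2 hc
        omega
    have hd := hstep (M - m).toNat
    have hMm : M - ((M - m).toNat : ℤ) = m := by omega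
    rw [hMm] at hd
    exact hd
  · intro h m
    have hle : Lfun hr nn m ≤ Lfun hr nn (m + 1) := Lfun_mono hr nn (by omega)
    have e1 := tail_split lam s hle
    have e2 := tail_split mu s hle
    have h1 := h m
    have h2 := h (m + 1)
    omega

lemma tails_iff_rc {r : ℕ} (hr : 0 < r) (nn : Fin r → ℕ) (lam mu : SeqPartition) (s : ℤ) :
    (∀ m : ℤ, tailC lam s (Lfun hr nn m) = tailC mu s (Lfun hr nn m)) ↔
      ∀ (k : ℕ) (i : ℤ) (j : Fin r),
        (i * (nTot nn : ℤ) + (sigBefore nn j : ℤ) ≤ bfun lam s k ↔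
         i * (nTot nn : ℤ) + (sigBefore nn j : ℤ) ≤ bfun mu s k) := by
  constructor
  · intro h k i j
    have hL : i * (nTot nn : ℤ) + (sigBefore nn j : ℤ) = Lfun hr nn (i * r + (j : ℕ)) :=
      (Lfun_spec hr nn i j).symm
    rw [hL, le_bfun_iff, le_bfun_iff, h]
  · intro h m
    have hL : Lfun hr nn m
        = (m / (r : ℤ)) * (nTot nn : ℤ) + (sigBefore nn (jIdx hr m) : ℤ) := rfl
    have hk : ∀ k : ℕ,
        (k < tailC lam s (Lfun hr nn m) ↔ k < tailC mu s (Lfun hr nn m)) := by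
      intro k
      rw [← le_bfun_iff, ← le_bfun_iff, hL]
      exact h k _ _
    have h1 := hk (tailC lam s (Lfun hr nn m))
    have h2 := hk (tailC mu s (Lfun hr nn m))
    omega

end St15

namespace St15

lemma node_mem (N : ℕ) (la : SeqPartition) (s t : ℤ) (a c : ℕ) :
    ((a, c) ∈ {p ∈ diagram la | res N p = ((t - s : ℤ) : ZMod N)}) ↔
      (1 ≤ a ∧ 1 ≤ c ∧ c ≤ la.parts (a - 1) ∧
        (N : ℤ) ∣ (t - s - ((c : ℤ) - (a : ℤ)))) := by
  have hres : (res N (a, c) = ((t - s : ℤ) : ZMod N)) ↔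
      (N : ℤ) ∣ (t - s - ((c : ℤ) - (a : ℤ))) := by
    rw [show res N (a, c) = ((((c : ℤ) - (a : ℤ)) : ℤ) : ZMod N) by simp [res],
      ZMod.intCast_eq_intCast_iff, Int.modEq_iff_dvd]
  constructor
  · rintro ⟨hd, hr2⟩
    exact ⟨hd.1, hd.2.1, hd.2.2, hres.mp hr2⟩
  · rintro ⟨h1, h2, h3, h4⟩
    exact ⟨⟨h1, h2, h3⟩, hres.mpr h4⟩

lemma node_side {r : ℕ} (nn : Fin r → ℕ) (la mb : SeqPartition) (s : ℤ) (j : Fin r)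
    (hset : {p ∈ diagram la | res (nTot nn) p
        = (((sigBefore nn j : ℤ) - s : ℤ) : ZMod (nTot nn))} =
      {p ∈ diagram mb | res (nTot nn) p
        = (((sigBefore nn j : ℤ) - s : ℤ) : ZMod (nTot nn))})
    (k : ℕ) (L : ℤ) (hdvd : (nTot nn : ℤ) ∣ ((sigBefore nn j : ℤ) - L))
    (hle : L ≤ bfun la s k) : L ≤ bfun mb s k := by
  by_cases hcase : L ≤ s - ((k : ℤ) + 1)
  · have hb : s - ((k : ℤ) + 1) ≤ bfun mb s k := by
      simp only [bfun]; push_cast; omega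
    omega
  · push_neg at hcase
    obtain ⟨cc, hcc⟩ : ∃ cc : ℕ, (cc : ℤ) = L - s + ((k : ℤ) + 1) :=
      ⟨(L - s + ((k : ℤ) + 1)).toNat, Int.toNat_of_nonneg (by omega)⟩
    have hmem : (k + 1, cc) ∈ {p ∈ diagram la | res (nTot nn) p
        = (((sigBefore nn j : ℤ) - s : ℤ) : ZMod (nTot nn))} := by
      rw [node_mem]
      refine ⟨by omega, by omega, ?_, ?_⟩
      · have hb := hle
        simp only [bfun] at hb
        have : k + 1 - 1 = k := by omega
        rw [this]
        omega
      · obtain ⟨w, hw⟩ := hdvd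
        refine ⟨w, ?_⟩
        push_cast
        linarith
    rw [hset, node_mem] at hmem
    obtain ⟨-, -, hle', -⟩ := hmem
    have : k + 1 - 1 = k := by omega
    rw [this] at hle'
    simp only [bfun]
    omega

lemma rc_iff_nodes {r : ℕ} (hr : 0 < r) (nn : Fin r → ℕ) (lam mu : SeqPartition) (s : ℤ) :
    (∀ (k : ℕ) (i : ℤ) (j : Fin r),
        (i * (nTot nn : ℤ) + (sigBefore nn j : ℤ) ≤ bfun lam s k ↔
         i * (nTot nn : ℤ) + (sigBefore nn j : ℤ) ≤ bfun mu s k)) ↔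
      ∀ j : Fin r,
        {p ∈ diagram lam | res (nTot nn) p
            = (((sigBefore nn j : ℤ) - s : ℤ) : ZMod (nTot nn))} =
        {p ∈ diagram mu | res (nTot nn) p
            = (((sigBefore nn j : ℤ) - s : ℤ) : ZMod (nTot nn))} := by
  constructor
  · intro h j
    have main : ∀ a c : ℕ, 1 ≤ a → 1 ≤ c →
        ((nTot nn : ℤ) ∣ ((sigBefore nn j : ℤ) - s - ((c : ℤ) - (a : ℤ)))) →
        (c ≤ lam.parts (a - 1) ↔ c ≤ mu.parts (a - 1)) := by
      intro a c ha hc hdvd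
      obtain ⟨k, rfl⟩ : ∃ k, a = k + 1 := ⟨a - 1, by omega⟩
      obtain ⟨i, hi⟩ := hdvd
      have hiff := h k (-i) j
      simp only [bfun] at hiff
      have hL : (-i) * (nTot nn : ℤ) + (sigBefore nn j : ℤ)
          = (c : ℤ) - ((k : ℤ) + 1) + s := by
        push_cast at hi
        linarith
      rw [hL] at hiff
      have hk1 : k + 1 - 1 = k := by omega
      rw [hk1]
      omega
    ext p
    obtain ⟨a, c⟩ := p
    rw [node_mem, node_mem]
    constructor
    · rintro ⟨h1, h2, h3, h4⟩
      exact ⟨h1, h2, (main a c h1 h2 h4).mp h3, h4⟩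
    · rintro ⟨h1, h2, h3, h4⟩
      exact ⟨h1, h2, (main a c h1 h2 h4).mpr h3, h4⟩
  · intro h k i j
    have hdvd : (nTot nn : ℤ) ∣ ((sigBefore nn j : ℤ)
        - (i * (nTot nn : ℤ) + (sigBefore nn j : ℤ))) := ⟨-i, by ring⟩
    exact ⟨node_side nn lam mu s j (h j) k _ hdvd,
      node_side nn mu lam s j (h j).symm k _ hdvd⟩

end St15

/-- `𝚝^𝐧_{β_s(λ)} = 𝚝^𝐧_{β_s(μ)}` iff `λ` and `μ` have the same sets of
nodes of `n`-residue `σ_j − s` for all `j = 0, …, r−1`. -/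
theorem statement15 (n r : ℕ) (hr : 0 < r) (nn : Fin r → ℕ) (hpos : ∀ j : Fin r, 0 < nn j)
    (hsum : nTot nn = n) (lam mu : SeqPartition) (s : ℤ) :
    tfun nn (betaSet lam s) = tfun nn (betaSet mu s) ↔
    ∀ j : Fin r,
      {p ∈ diagram lam | res n p = (((sigBefore nn j : ℤ) - s : ℤ) : ZMod n)} =
      {p ∈ diagram mu | res n p = (((sigBefore nn j : ℤ) - s : ℤ) : ZMod n)} := by
  subst hsum
  have hn : 0 < nTot nn := by
    unfold nTot
    exact Finset.sum_pos (fun k _ => hpos k) ⟨⟨0, hr⟩, Finset.mem_univ _⟩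
  exact (St15.tfun_iff_tails hr nn hn lam mu s).trans
    ((St15.tails_iff_rc hr nn lam mu s).trans (St15.rc_iff_nodes hr nn lam mu s))
end

section
/- Let p be a prime, let λ, μ ∈ 𝒫, and let I be the set of p-residues of the nodes in ([λ] \ [μ]) ∪ ([μ] \ [λ]). Suppose no two elements of I are adjacent (two residue classes a, b modulo p are adjacent iff a − b ≡ ±1 (mod p)). Then there exist s ∈ {0, 1} and a tuple 𝐧 = (n_1, …, n_r) of positive integers with n_j ∈ {1,2} for all j and n_1 + ⋯ + n_r = p, such that 𝚝^𝐧_{β_s(λ)} = 𝚝^𝐧_{β_s(μ)} and I = {residue class of (n_1 + ⋯ + n_i) − s − 1 modulo p : 1 ≤ i ≤ r, n_i = 2}. -/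
open scoped BigOperators

private def blockList (q : ℕ → Prop) [DecidablePred q] (p : ℕ) (start : ℕ) : List ℕ :=
  if _h : start < p then
    if q (start + 1) ∧ start + 2 ≤ p then 2 :: blockList q p (start + 2)
    else 1 :: blockList q p (start + 1)
  else []
termination_by p - start
decreasing_by all_goals omega

private lemma blockList_of_ge (q : ℕ → Prop) [DecidablePred q] (p start : ℕ)
    (h : ¬ start < p) : blockList q p start = [] := by
  rw [blockList, dif_neg h]

private lemma blockList_spec (q : ℕ → Prop) [DecidablePred q] (p : ℕ)
    (hq01 : ∀ m, q m → ¬ q (m + 1)) (hqp : ¬ q p) :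
    ∀ fuel start, p ≤ start + fuel → start ≤ p → ¬ q start →
      ((blockList q p start).sum + start = p) ∧
      (∀ x ∈ blockList q p start, x = 1 ∨ x = 2) ∧
      (∀ n, n ≤ (blockList q p start).length →
        ¬ q (start + ((blockList q p start).take n).sum)) ∧
      (∀ n (h : n < (blockList q p start).length),
        ((blockList q p start).get ⟨n, h⟩ = 2 ↔
          q (start + ((blockList q p start).take n).sum + 1))) ∧
      (∀ m, start < m → m < p → q m →
        ∃ n, ∃ h : n < (blockList q p start).length,
          (blockList q p start).get ⟨n, h⟩ = 2 ∧
          start + ((blockList q p start).take n).sum + 1 = m) := by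
  intro fuel
  induction fuel with
  | zero =>
    intro start h1 h2 h3
    have hsp : start = p := by omega
    rw [blockList_of_ge q p start (by omega)]
    subst hsp
    refine ⟨by simp, by simp, ?_, by simp, by omega⟩
    intro n hn
    simp only [List.length_nil, Nat.le_zero] at hn
    subst hn
    simpa using h3
  | succ fuel ih =>
    intro start h1 h2 h3
    by_cases hsp : start < p
    case neg =>
      have hsp' : start = p := by omega
      rw [blockList_of_ge q p start (by omega)]
      subst hsp'
      refine ⟨by simp, by simp, ?_, by simp, by omega⟩
      intro n hn
      simp only [List.length_nil, Nat.le_zero] at hn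
      subst hn
      simpa using h3
    case pos =>
      by_cases hq1 : q (start + 1)
      · have h2p : start + 2 ≤ p := by
          rcases Nat.lt_or_ge (start + 1) p with h | h
          · omega
          · exfalso; have : start + 1 = p := by omega
            exact hqp (this ▸ hq1)
        have hL : blockList q p start = 2 :: blockList q p (start + 2) := by
          rw [blockList, dif_pos hsp, if_pos ⟨hq1, h2p⟩]
        have hns : ¬ q (start + 2) := hq01 _ hq1
        obtain ⟨ih1, ih2, ih3, ih4, ih5⟩ := ih (start + 2) (by omega) h2p hns
        rw [hL]
        refine ⟨?_, ?_, ?_, ?_, ?_⟩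
        · simp only [List.sum_cons]; omega
        · intro x hx
          rcases List.mem_cons.mp hx with h | h
          · right; exact h
          · exact ih2 x h
        · intro n hn
          cases n with
          | zero => simpa using h3
          | succ k =>
            rw [List.take_succ_cons]
            simp only [List.sum_cons]
            rw [show start + (2 + ((blockList q p (start + 2)).take k).sum)
              = (start + 2) + ((blockList q p (start + 2)).take k).sum by omega]
            exact ih3 k (by simpa using hn)
        · intro n hn
          cases n with
          | zero =>
            simp only [List.get, List.take_zero, List.sum_nil, Nat.add_zero]
            simpa using hq1
          | succ k =>
            simp only [List.get_cons_succ, List.take_succ_cons, List.sum_cons]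
            rw [show start + (2 + ((blockList q p (start + 2)).take k).sum)
              = (start + 2) + ((blockList q p (start + 2)).take k).sum by omega]
            exact ih4 k (by simpa using hn)
        · intro m hm1 hm2 hqm
          rcases Nat.lt_or_ge (start + 2) m with h | h
          · obtain ⟨k, hk, hg, he⟩ := ih5 m h hm2 hqm
            refine ⟨k + 1, by simpa using Nat.succ_lt_succ hk, ?_, ?_⟩
            · simpa using hg
            · simp only [List.take_succ_cons, List.sum_cons]
              omega
          · have : m = start + 1 := by
              rcases Nat.eq_or_lt_of_le h with h' | h'
              · exact absurd (h' ▸ hqm) hns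
              · omega
            subst this
            exact ⟨0, by simp, by simp [List.get], by simp⟩
      · have hL : blockList q p start = 1 :: blockList q p (start + 1) := by
          rw [blockList, dif_pos hsp, if_neg (fun h => hq1 h.1)]
        obtain ⟨ih1, ih2, ih3, ih4, ih5⟩ := ih (start + 1) (by omega) (by omega) hq1
        rw [hL]
        refine ⟨?_, ?_, ?_, ?_, ?_⟩
        · simp only [List.sum_cons]; omega
        · intro x hx
          rcases List.mem_cons.mp hx with h | h
          · left; exact h
          · exact ih2 x h
        · intro n hn
          cases n with
          | zero => simpa using h3
          | succ k =>
            rw [List.take_succ_cons]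
            simp only [List.sum_cons]
            rw [show start + (1 + ((blockList q p (start + 1)).take k).sum)
              = (start + 1) + ((blockList q p (start + 1)).take k).sum by omega]
            exact ih3 k (by simpa using hn)
        · intro n hn
          cases n with
          | zero =>
            simp only [List.get, List.take_zero, List.sum_nil, Nat.add_zero]
            constructor
            · intro h; omega
            · intro h; exact absurd h hq1
          | succ k =>
            simp only [List.get_cons_succ, List.take_succ_cons, List.sum_cons]
            rw [show start + (1 + ((blockList q p (start + 1)).take k).sum)
              = (start + 1) + ((blockList q p (start + 1)).take k).sum by omega]
            exact ih4 k (by simpa using hn)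
        · intro m hm1 hm2 hqm
          have hne : m ≠ start + 1 := fun h => hq1 (h ▸ hqm)
          obtain ⟨k, hk, hg, he⟩ := ih5 m (by omega) hm2 hqm
          refine ⟨k + 1, by simpa using Nat.succ_lt_succ hk, ?_, ?_⟩
          · simpa using hg
          · simp only [List.take_succ_cons, List.sum_cons]
            omega

private lemma sum_filter_take (L : List ℕ) :
    ∀ n, n ≤ L.length →
      (∑ k ∈ Finset.univ.filter (fun k : Fin L.length => (k : ℕ) < n), L.get k)
        = (L.take n).sum := by
  intro n
  induction n with
  | zero => intro _; simp
  | succ k ih =>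
    intro h
    have hk : k < L.length := h
    have hset : Finset.univ.filter (fun j : Fin L.length => (j : ℕ) < k + 1)
        = insert ⟨k, hk⟩ (Finset.univ.filter (fun j : Fin L.length => (j : ℕ) < k)) := by
      ext j
      simp only [Finset.mem_filter, Finset.mem_univ, true_and, Finset.mem_insert, Fin.ext_iff]
      omega
    rw [hset, Finset.sum_insert (by simp), ih (le_of_lt hk),
      List.sum_take_succ L k hk]
    exact Nat.add_comm _ _


private def bnum (lam : SeqPartition) (s : ℤ) (i : ℕ) : ℤ := (lam.parts i : ℤ) + s - ((i : ℤ) + 1)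

private lemma betaSet_eq_range_s19 (lam : SeqPartition) (s : ℤ) :
    betaSet lam s = Set.range (bnum lam s) := by
  ext x
  simp only [betaSet, Set.mem_setOf_eq, Set.mem_range, bnum, eq_comm]

private lemma bnum_injective (lam : SeqPartition) (s : ℤ) : Function.Injective (bnum lam s) := by
  have : StrictAnti (bnum lam s) := by
    apply strictAnti_nat_of_succ_lt
    intro i
    have h := lam.antitone' i (i + 1) (Nat.le_succ i)
    unfold bnum
    push_cast
    omega
  exact this.injective

private def NS (lam : SeqPartition) (s x : ℤ) : Set ℕ := {i : ℕ | x ≤ bnum lam s i}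

private lemma NS_finite (lam : SeqPartition) (s x : ℤ) : (NS lam s x).Finite := by
  apply Set.Finite.subset (Set.finite_Iio ((lam.parts 0 : ℤ) + s - x + 1).toNat)
  intro i hi
  have h1 : lam.parts i ≤ lam.parts 0 := lam.antitone' 0 i (Nat.zero_le i)
  have h2 : x ≤ (lam.parts i : ℤ) + s - ((i : ℤ) + 1) := hi
  simp only [Set.mem_Iio]
  omega

private lemma NS_subset (lam : SeqPartition) (s x x' : ℤ) (h : x ≤ x') :
    NS lam s x' ⊆ NS lam s x := fun _ hi => le_trans h hi

private lemma window_eq (lam : SeqPartition) (s u v : ℤ) :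
    betaSet lam s ∩ Set.Ico u v = bnum lam s '' (NS lam s u \ NS lam s v) := by
  ext x
  constructor
  · rintro ⟨hB, hu, hv⟩
    rw [betaSet_eq_range_s19] at hB
    obtain ⟨i, rfl⟩ := hB
    exact ⟨i, ⟨hu, fun h => absurd hv (not_lt.mpr h)⟩, rfl⟩
  · rintro ⟨i, ⟨hu, hv⟩, rfl⟩
    exact ⟨⟨i, rfl⟩, hu, not_le.mp hv⟩

private lemma window_card (lam : SeqPartition) (s u v : ℤ) (huv : u ≤ v) :
    (betaSet lam s ∩ Set.Ico u v).ncard = (NS lam s u).ncard - (NS lam s v).ncard := by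
  rw [window_eq, Set.ncard_image_of_injective _ (bnum_injective lam s)]
  exact Set.ncard_diff (NS_subset lam s u v huv) (NS_finite lam s v)

private lemma NS_mono_of (p : ℕ) (lam mu : SeqPartition) (s x : ℤ) (I : Set (ZMod p))
    (hIc : ∀ a ∈ diagram lam \ diagram mu, res p a ∈ I)
    (hx : (((x - s : ℤ) : ZMod p)) ∉ I) : NS lam s x ⊆ NS mu s x := by
  intro i hi
  by_contra hni
  have h1 : x ≤ (lam.parts i : ℤ) + s - ((i : ℤ) + 1) := hi
  have h2 : (mu.parts i : ℤ) + s - ((i : ℤ) + 1) < x := by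
    simpa [NS, bnum, not_le] using hni
  set jz : ℤ := x - s + i + 1 with hjz
  have hmu0 : (0 : ℤ) ≤ (mu.parts i : ℤ) := Int.natCast_nonneg _
  have hj1 : (mu.parts i : ℤ) < jz := by omega
  have hj2 : jz ≤ (lam.parts i : ℤ) := by omega
  obtain ⟨jn, hjn⟩ : ∃ jn : ℕ, (jn : ℤ) = jz := ⟨jz.toNat, Int.toNat_of_nonneg (by omega)⟩
  have hmem : ((i + 1 : ℕ), jn) ∈ diagram lam \ diagram mu := by
    constructor
    · refine ⟨show 1 ≤ i + 1 by omega, show 1 ≤ jn by omega, ?_⟩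
      show jn ≤ lam.parts (i + 1 - 1)
      rw [Nat.add_sub_cancel]
      omega
    · intro hc
      have h3 : jn ≤ mu.parts (i + 1 - 1) := hc.2.2
      rw [Nat.add_sub_cancel] at h3
      omega
  apply hx
  have hres := hIc _ hmem
  have : res p ((i + 1 : ℕ), jn) = (((x - s : ℤ) : ZMod p)) := by
    have harg : ((jn : ℤ)) - ((i + 1 : ℕ) : ℤ) = x - s := by push_cast; omega
    simp only [res]
    rw [← harg]
    push_cast
    ring
  rwa [this] at hres

private lemma Xset_eq {r : ℕ} (nn : Fin r → ℕ) (B : Set ℤ) (i : ℤ) (j : Fin r) :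
    Xset nn B i j = (fun x => x - (i * (nTot nn : ℤ) + (sigBefore nn j : ℤ))) ''
      (B ∩ Set.Ico (i * (nTot nn : ℤ) + (sigBefore nn j : ℤ))
        (i * (nTot nn : ℤ) + (sigBefore nn j : ℤ) + (nn j : ℤ))) := by
  ext y
  simp only [Xset, Set.mem_setOf_eq, Set.mem_image, Set.mem_inter_iff, Set.mem_Ico]
  constructor
  · rintro ⟨x, hx, hl, hr, rfl⟩
    exact ⟨x, ⟨hx, by omega, by omega⟩, by ring⟩
  · rintro ⟨x, ⟨hx, hl, hr⟩, rfl⟩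
    exact ⟨x, hx, by omega, by omega, by ring⟩

private lemma Xset_ncard {r : ℕ} (nn : Fin r → ℕ) (B : Set ℤ) (i : ℤ) (j : Fin r) :
    (Xset nn B i j).ncard = (B ∩ Set.Ico (i * (nTot nn : ℤ) + (sigBefore nn j : ℤ))
        (i * (nTot nn : ℤ) + (sigBefore nn j : ℤ) + (nn j : ℤ))).ncard := by
  rw [Xset_eq]
  exact Set.ncard_image_of_injective _ (fun x y h => sub_left_inj.mp h)


/-- If the set `I` of `p`-residues of the nodes of the symmetric difference
of `[λ]` and ` [μ]` has no two adjacent elements, then there are `s ∈ {0,1}` and a tuple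
`𝐧 = (n_1, …, n_r)` with `n_j ∈ {1,2}` and `Σ n_j = p` such that
`𝚝^𝐧_{β_s(λ)} = 𝚝^𝐧_{β_s(μ)}` and `I = {σ_i − s − 1 mod p : n_i = 2}`. -/
theorem statement19 (p : ℕ) (hp : Nat.Prime p) (lam mu : SeqPartition)
    (I : Set (ZMod p))
    (hI : I = res p '' ((diagram lam \ diagram mu) ∪ (diagram mu \ diagram lam)))
    (hadj : ∀ a ∈ I, ∀ b ∈ I, a - b ≠ 1 ∧ a - b ≠ -1) :
    ∃ s : ℤ, (s = 0 ∨ s = 1) ∧ ∃ r : ℕ, ∃ nn : Fin r → ℕ,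
      (∀ j : Fin r, nn j = 1 ∨ nn j = 2) ∧ nTot nn = p ∧
      tfun nn (betaSet lam s) = tfun nn (betaSet mu s) ∧
      I = {c : ZMod p | ∃ j : Fin r, nn j = 2 ∧
        c = ((((sigBefore nn j : ℤ) + (nn j : ℤ) - s - 1 : ℤ)) : ZMod p)} := by
  classical
  have hp0 : 0 < p := hp.pos
  obtain ⟨s, hs01, hs⟩ : ∃ s : ℤ, (s = 0 ∨ s = 1) ∧
      (((((0 : ℕ) : ℤ)) - s : ℤ) : ZMod p) ∉ I := by
    by_cases h0 : (((((0 : ℕ) : ℤ)) - (0 : ℤ) : ℤ) : ZMod p) ∈ I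
    · refine ⟨1, Or.inr rfl, fun h1 => ?_⟩
      apply (hadj _ h0 _ h1).1
      push_cast
      ring
    · exact ⟨0, Or.inl rfl, h0⟩
  set q : ℕ → Prop := fun m => (((m : ℤ) - s : ℤ) : ZMod p) ∈ I with hqdef
  have hq0 : ¬ q 0 := hs
  have hqp : ¬ q p := by
    intro h
    apply hs
    have he : ((((p : ℕ) : ℤ) - s : ℤ) : ZMod p) = (((((0 : ℕ) : ℤ)) - s : ℤ) : ZMod p) := by
      push_cast
      simp [ZMod.natCast_self]
    have h' : ((((p : ℕ) : ℤ) - s : ℤ) : ZMod p) ∈ I := h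
    rwa [he] at h'
  have hq01 : ∀ m, q m → ¬ q (m + 1) := by
    intro m h1 h2
    apply (hadj _ h2 _ h1).1
    push_cast
    ring
  obtain ⟨hsum, hmem, hbd, hiff, hcov⟩ :=
    blockList_spec q p hq01 hqp p 0 (by omega) (by omega) hq0
  set L := blockList q p 0 with hLdef
  have hsig : ∀ j : Fin L.length, sigBefore L.get j = (L.take (j : ℕ)).sum :=
    fun j => sum_filter_take L (j : ℕ) (le_of_lt j.isLt)
  have hTot : nTot L.get = p := by
    have h1 : Finset.univ.filter (fun k : Fin L.length => (k : ℕ) < L.length)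
        = Finset.univ := by
      ext k
      simp [k.isLt]
    have h2 := sum_filter_take L L.length le_rfl
    rw [h1, List.take_length] at h2
    show ∑ k, L.get k = p
    omega
  have key : ∀ m : ℕ, ¬ q m → ∀ i : ℤ,
      (((i * (nTot L.get : ℤ) + (m : ℤ) - s : ℤ) : ZMod p)) ∉ I := by
    intro m hm i hmm
    apply hm
    show (((m : ℤ) - s : ℤ) : ZMod p) ∈ I
    have he : (((i * (nTot L.get : ℤ) + (m : ℤ) - s : ℤ) : ZMod p))
        = (((m : ℤ) - s : ℤ) : ZMod p) := by
      rw [hTot]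
      push_cast
      rw [ZMod.natCast_self]
      ring
    rwa [he] at hmm
  have hIc1 : ∀ a ∈ diagram lam \ diagram mu, res p a ∈ I := by
    intro a ha
    rw [hI]
    exact ⟨a, Or.inl ha, rfl⟩
  have hIc2 : ∀ a ∈ diagram mu \ diagram lam, res p a ∈ I := by
    intro a ha
    rw [hI]
    exact ⟨a, Or.inr ha, rfl⟩
  have hNSeq : ∀ x : ℤ, (((x - s : ℤ) : ZMod p)) ∉ I → NS lam s x = NS mu s x :=
    fun x hx => Set.Subset.antisymm (NS_mono_of p lam mu s x I hIc1 hx)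
      (NS_mono_of p mu lam s x I hIc2 hx)
  refine ⟨s, hs01, L.length, L.get, fun j => hmem _ (List.get_mem L j), hTot, ?_, ?_⟩
  · funext pr
    obtain ⟨i, j⟩ := pr
    show (Xset L.get (betaSet lam s) i j).ncard = (Xset L.get (betaSet mu s) i j).ncard
    rw [Xset_ncard L.get (betaSet lam s) i j, Xset_ncard L.get (betaSet mu s) i j]
    have hle : i * (nTot L.get : ℤ) + (sigBefore L.get j : ℤ)
        ≤ i * (nTot L.get : ℤ) + (sigBefore L.get j : ℤ) + (L.get j : ℤ) := by
      have h0' : (0 : ℤ) ≤ (L.get j : ℤ) := Int.natCast_nonneg _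
      omega
    rw [window_card lam s _ _ hle, window_card mu s _ _ hle]
    have hU := key (sigBefore L.get j)
      (by rw [hsig j]; simpa using hbd (j : ℕ) (le_of_lt j.isLt)) i
    have hVq : ¬ q (sigBefore L.get j + L.get j) := by
      have h2 : sigBefore L.get j + L.get j = (L.take ((j : ℕ) + 1)).sum := by
        rw [hsig j, List.sum_take_succ L (j : ℕ) j.isLt]
        rfl
      rw [h2]
      simpa using hbd ((j : ℕ) + 1) j.isLt
    have hV := key (sigBefore L.get j + L.get j) hVq i
    have hVcast : (i * (nTot L.get : ℤ) + ((sigBefore L.get j + L.get j : ℕ) : ℤ) - s : ℤ)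
        = (i * (nTot L.get : ℤ) + (sigBefore L.get j : ℤ) + (L.get j : ℤ) - s : ℤ) := by
      push_cast
      ring
    rw [hVcast] at hV
    rw [hNSeq _ hU, hNSeq _ hV]
  · haveI : NeZero p := ⟨hp0.ne'⟩
    ext c
    simp only [Set.mem_setOf_eq]
    constructor
    · intro hc
      set m : ℕ := (c + ((s : ℤ) : ZMod p)).val with hmdef
      have hm : ((m : ℕ) : ZMod p) = c + ((s : ℤ) : ZMod p) := by
        rw [hmdef, ZMod.natCast_val, ZMod.cast_id]
      have hcm : (((m : ℤ) - s : ℤ) : ZMod p) = c := by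
        push_cast
        rw [hm]
        ring
      have hqm : q m := by
        show (((m : ℤ) - s : ℤ) : ZMod p) ∈ I
        rw [hcm]
        exact hc
      have hmp : m < p := ZMod.val_lt _
      have hm0 : 0 < m := by
        rcases Nat.eq_zero_or_pos m with h | h
        · exact absurd (h ▸ hqm) hq0
        · exact h
      obtain ⟨n, hn, hg2, hsum1⟩ := hcov m hm0 hmp hqm
      refine ⟨⟨n, hn⟩, hg2, ?_⟩
      have hts : (L.take n).sum = m - 1 := by omega
      rw [hsig ⟨n, hn⟩, hg2, hts, ← hcm]
      congr 1
      omega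
    · rintro ⟨j, hj2, rfl⟩
      have hqj := (hiff (j : ℕ) j.isLt).mp hj2
      rw [Nat.zero_add] at hqj
      have hqj' : (((((L.take (j : ℕ)).sum + 1 : ℕ) : ℤ) - s : ℤ) : ZMod p) ∈ I := hqj
      have heq : (((sigBefore L.get j : ℤ) + (L.get j : ℤ) - s - 1 : ℤ) : ZMod p)
          = (((((L.take (j : ℕ)).sum + 1 : ℕ) : ℤ) - s : ℤ) : ZMod p) := by
        rw [hsig j, hj2]
        push_cast
        ring
      rw [heq]
      exact hqj'
end
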